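/- arXiv:math/0607135 — 8 statements merged into one kernel-verified Lean document; each statement's English description precedes it below -/
import Mathlib

section
/- Assume (A0): aᵢⱼ > 0 for all i,j ∈ {1,2} and b₁, b₂ > 0. Let λ > 0, α ∈ [0,1], τ > 0, and let x₁, x₂ : ℝ → ℝ be continuously differentiable 2π-periodic functions with ∫₀^{2π} xᵢ(t) dt = 0 and xᵢ(t) > −bᵢ for all t (i = 1,2), satisfying x₁'(t) = −αλ(a₁₁x₁(t−τ/λ) + a₁₂x₂(t−τ/λ))(b₁ + x₁(t)) and x₂'(t) = −αλ(a₂₁x₁(t−τ/λ) + a₂₂x₂(t−τ/λ))(b₂ + x₂(t)) for all t ∈ ℝ. Then for all t ∈ ℝ: x₁(t) < b₁·exp(2πλ(a₁₁b₁ + a₁₂b₂)) − b₁ and x₂(t) < b₂·exp(2πλ(a₂₁b₁ + a₂₂b₂)) − b₂. -/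
open Real

lemma lv_exists_pt (x : ℝ → ℝ) (hx : Continuous x) (hp : Function.Periodic x (2*π))
    (hm : (∫ s in (0:ℝ)..(2*π), x s) = 0) (t : ℝ) :
    ∃ t₀, x t₀ ≤ 0 ∧ t₀ ≤ t ∧ t - t₀ < 2 * π := by
  have h2π : (0:ℝ) < 2*π := by positivity
  obtain ⟨s, hs⟩ : ∃ s, x s ≤ 0 := by
    by_contra h
    push_neg at h
    have : 0 < ∫ u in (0:ℝ)..(2*π), x u :=
      intervalIntegral.intervalIntegral_pos_of_pos_on (hx.intervalIntegrable _ _)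
        (fun u _ => h u) h2π
    linarith
  set k : ℤ := ⌊(t - s)/(2*π)⌋ with hk
  have hfl : (k:ℝ) ≤ (t - s)/(2*π) := Int.floor_le _
  have hfl' : (t - s)/(2*π) < k + 1 := Int.lt_floor_add_one _
  have h1 : (k:ℝ) * (2*π) ≤ t - s := (le_div_iff₀ h2π).mp hfl
  have h2 : t - s < ((k:ℝ) + 1) * (2*π) := (div_lt_iff₀ h2π).mp hfl'
  refine ⟨s + (k:ℝ) * (2*π), ?_, by linarith, by nlinarith⟩
  have := (hp.int_mul k) s
  rw [this]; exact hs

lemma lv_aux_bound (b M : ℝ) (hb : 0 < b) (hM : 0 < M)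
    (x g : ℝ → ℝ) (hg : Continuous g)
    (hbx : ∀ t, -b < x t)
    (hder : ∀ t, HasDerivAt x (g t * (b + x t)) t)
    (hgM : ∀ t, g t ≤ M)
    (t₀ t : ℝ) (ht₀ : x t₀ ≤ 0) (h1 : t₀ ≤ t) (h2 : t - t₀ < 2 * π) :
    x t < b * Real.exp (2 * π * M) - b := by
  have hpos : ∀ s, 0 < b + x s := fun s => by linarith [hbx s]
  have hylog : ∀ s ∈ Set.uIcc t₀ t, HasDerivAt (fun u => Real.log (b + x u)) (g s) s := by
    intro s _
    have h := ((hasDerivAt_const s b).add (hder s)).log (hpos s).ne'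
    simpa [mul_div_assoc, div_self (hpos s).ne'] using h
  have key : ∫ s in t₀..t, g s = Real.log (b + x t) - Real.log (b + x t₀) :=
    intervalIntegral.integral_eq_sub_of_hasDerivAt hylog (hg.intervalIntegrable _ _)
  have hbd : ∫ s in t₀..t, g s ≤ (t - t₀) * M := by
    calc ∫ s in t₀..t, g s ≤ ∫ _s in t₀..t, M :=
          intervalIntegral.integral_mono_on h1 (hg.intervalIntegrable _ _)
            (intervalIntegrable_const) (fun s _ => hgM s)
      _ = (t - t₀) * M := by simp [smul_eq_mul]
  have hlog0 : Real.log (b + x t₀) ≤ Real.log b :=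
    Real.log_le_log (hpos t₀) (by linarith)
  have hlt : Real.log (b + x t) < Real.log b + 2 * π * M := by
    have : (t - t₀) * M < 2 * π * M := by nlinarith
    nlinarith [key, hbd]
  have hfin := Real.exp_lt_exp.mpr hlt
  rw [Real.exp_log (hpos t), Real.exp_add, Real.exp_log hb] at hfin
  linarith


/-- A priori upper bounds for solutions of the parametrized system (PA). -/
theorem lotka_volterra_apriori_upper_bound
    (a11 a12 a21 a22 b1 b2 lam α τ : ℝ)
    (hA0 : 0 < a11 ∧ 0 < a12 ∧ 0 < a21 ∧ 0 < a22)
    (hb1 : 0 < b1) (hb2 : 0 < b2)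
    (hlam : 0 < lam) (hα : α ∈ Set.Icc (0:ℝ) 1) (hτ : 0 < τ)
    (x1 x2 : ℝ → ℝ) (hx1 : ContDiff ℝ 1 x1) (hx2 : ContDiff ℝ 1 x2)
    (hp1 : Function.Periodic x1 (2 * π)) (hp2 : Function.Periodic x2 (2 * π))
    (hm1 : (∫ t in (0:ℝ)..(2 * π), x1 t) = 0)
    (hm2 : (∫ t in (0:ℝ)..(2 * π), x2 t) = 0)
    (hb1' : ∀ t : ℝ, -b1 < x1 t) (hb2' : ∀ t : ℝ, -b2 < x2 t)
    (heq1 : ∀ t : ℝ, deriv x1 t =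
      -(α * lam) * (a11 * x1 (t - τ / lam) + a12 * x2 (t - τ / lam))
        * (b1 + x1 t))
    (heq2 : ∀ t : ℝ, deriv x2 t =
      -(α * lam) * (a21 * x1 (t - τ / lam) + a22 * x2 (t - τ / lam))
        * (b2 + x2 t)) :
    ∀ t : ℝ,
      x1 t < b1 * Real.exp (2 * π * lam * (a11 * b1 + a12 * b2)) - b1 ∧
      x2 t < b2 * Real.exp (2 * π * lam * (a21 * b1 + a22 * b2)) - b2 := by
  obtain ⟨ha11, ha12, ha21, ha22⟩ := hA0
  obtain ⟨hα0, hα1⟩ := hα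
  have hc1 : Continuous x1 := hx1.continuous
  have hc2 : Continuous x2 := hx2.continuous
  intro t
  constructor
  · set M := lam * (a11 * b1 + a12 * b2) with hMdef
    have hM : 0 < M := by positivity
    set g : ℝ → ℝ := fun u => -(α * lam) * (a11 * x1 (u - τ / lam) + a12 * x2 (u - τ / lam))
      with hgdef
    have hg : Continuous g := by fun_prop
    have hder : ∀ u, HasDerivAt x1 (g u * (b1 + x1 u)) u := fun u =>
      (heq1 u) ▸ (hx1.differentiable one_ne_zero u).hasDerivAt
    have hgM : ∀ u, g u ≤ M := by
      intro u
      have hS : -(a11 * b1 + a12 * b2) < a11 * x1 (u - τ / lam) + a12 * x2 (u - τ / lam) := by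
        nlinarith [hb1' (u - τ / lam), hb2' (u - τ / lam)]
      have h1 : 0 ≤ α * lam := mul_nonneg hα0 hlam.le
      simp only [hgdef, hMdef]
      nlinarith [mul_nonneg h1 (by linarith : (0:ℝ) ≤ a11 * x1 (u - τ / lam)
        + a12 * x2 (u - τ / lam) + (a11 * b1 + a12 * b2)),
        mul_nonneg (mul_nonneg (sub_nonneg.mpr hα1) hlam.le) (by positivity :
          (0:ℝ) ≤ a11 * b1 + a12 * b2)]
    obtain ⟨t₀, ht₀, hle, hlt⟩ := lv_exists_pt x1 hc1 hp1 hm1 t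
    have := lv_aux_bound b1 M hb1 hM x1 g hg hb1' hder hgM t₀ t ht₀ hle hlt
    calc x1 t < b1 * Real.exp (2 * π * M) - b1 := this
      _ = b1 * Real.exp (2 * π * lam * (a11 * b1 + a12 * b2)) - b1 := by
          rw [hMdef]; ring_nf
  · set M := lam * (a21 * b1 + a22 * b2) with hMdef
    have hM : 0 < M := by positivity
    set g : ℝ → ℝ := fun u => -(α * lam) * (a21 * x1 (u - τ / lam) + a22 * x2 (u - τ / lam))
      with hgdef
    have hg : Continuous g := by fun_prop
    have hder : ∀ u, HasDerivAt x2 (g u * (b2 + x2 u)) u := fun u =>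
      (heq2 u) ▸ (hx2.differentiable one_ne_zero u).hasDerivAt
    have hgM : ∀ u, g u ≤ M := by
      intro u
      have hS : -(a21 * b1 + a22 * b2) < a21 * x1 (u - τ / lam) + a22 * x2 (u - τ / lam) := by
        nlinarith [hb1' (u - τ / lam), hb2' (u - τ / lam)]
      have h1 : 0 ≤ α * lam := mul_nonneg hα0 hlam.le
      simp only [hgdef, hMdef]
      nlinarith [mul_nonneg h1 (by linarith : (0:ℝ) ≤ a21 * x1 (u - τ / lam)
        + a22 * x2 (u - τ / lam) + (a21 * b1 + a22 * b2)),
        mul_nonneg (mul_nonneg (sub_nonneg.mpr hα1) hlam.le) (by positivity :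
          (0:ℝ) ≤ a21 * b1 + a22 * b2)]
    obtain ⟨t₀, ht₀, hle, hlt⟩ := lv_exists_pt x2 hc2 hp2 hm2 t
    have := lv_aux_bound b2 M hb2 hM x2 g hg hb2' hder hgM t₀ t ht₀ hle hlt
    calc x2 t < b2 * Real.exp (2 * π * M) - b2 := this
      _ = b2 * Real.exp (2 * π * lam * (a21 * b1 + a22 * b2)) - b2 := by
          rw [hMdef]; ring_nf
end

section
/- Assume (A0): aᵢⱼ > 0 for all i,j ∈ {1,2} and b₁, b₂ > 0. Let λ > 0, α ∈ [0,1], τ > 0, and let x₁, x₂ : ℝ → ℝ be continuously differentiable 2π-periodic functions with ∫₀^{2π} xᵢ(t) dt = 0 and xᵢ(t) > −bᵢ for all t (i = 1,2), satisfying x₁'(t) = −αλ(a₁₁x₁(t−τ/λ) + a₁₂x₂(t−τ/λ))(b₁ + x₁(t)) and x₂'(t) = −αλ(a₂₁x₁(t−τ/λ) + a₂₂x₂(t−τ/λ))(b₂ + x₂(t)) for all t ∈ ℝ. Set d₃ = b₁·exp(2πλ(a₁₁b₁ + a₁₂b₂)) − b₁ and d₄ = b₂·exp(2πλ(a₂₁b₁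 + a₂₂b₂)) − b₂. Then for all t ∈ ℝ: x₁(t) > b₁·exp(−2πλ(a₁₁d₃ + a₁₂d₄)) − b₁ > −b₁ and x₂(t) > b₂·exp(−2πλ(a₂₁d₃ + a₂₂d₄)) − b₂ > −b₂. -/
open Real intervalIntegral

lemma my_exists_zero (x : ℝ → ℝ) (hx : Continuous x)
    (hm : (∫ t in (0:ℝ)..(2*π), x t) = 0) : ∃ s0, x s0 = 0 := by
  have hπ : (0:ℝ) < 2*π := by positivity
  obtain ⟨s1, hs1, hmin⟩ := isCompact_Icc.exists_isMinOn (Set.nonempty_Icc.2 hπ.le) hx.continuousOn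
  obtain ⟨s2, hs2, hmax⟩ := isCompact_Icc.exists_isMaxOn (Set.nonempty_Icc.2 hπ.le) hx.continuousOn
  have h1 : x s1 ≤ 0 := by
    by_contra h
    push_neg at h
    have hle : (∫ t in (0:ℝ)..(2*π), x s1) ≤ ∫ t in (0:ℝ)..(2*π), x t :=
      intervalIntegral.integral_mono_on hπ.le intervalIntegrable_const
        (hx.intervalIntegrable _ _) (fun t ht => hmin ht)
    rw [intervalIntegral.integral_const, hm] at hle
    simp only [smul_eq_mul] at hle
    nlinarith
  have h2 : 0 ≤ x s2 := by
    by_contra h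
    push_neg at h
    have hle : (∫ t in (0:ℝ)..(2*π), x t) ≤ ∫ t in (0:ℝ)..(2*π), x s2 :=
      intervalIntegral.integral_mono_on hπ.le (hx.intervalIntegrable _ _)
        intervalIntegrable_const (fun t ht => hmax ht)
    rw [intervalIntegral.integral_const, hm] at hle
    simp only [smul_eq_mul] at hle
    nlinarith
  have h0 : (0:ℝ) ∈ Set.uIcc (x s1) (x s2) := Set.mem_uIcc.2 (Or.inl ⟨h1, h2⟩)
  obtain ⟨s0, _, hs0⟩ := intermediate_value_uIcc (hx.continuousOn (s := Set.uIcc s1 s2)) h0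
  exact ⟨s0, hs0⟩

lemma my_exists_near (x : ℝ → ℝ) (hp : Function.Periodic x (2*π)) (s0 t : ℝ) :
    ∃ t0, x t0 = x s0 ∧ 0 ≤ t - t0 ∧ t - t0 < 2*π := by
  have hπ : (0:ℝ) < 2*π := by positivity
  set k : ℤ := ⌊(t - s0)/(2*π)⌋ with hk
  refine ⟨s0 + k*(2*π), ?_, ?_, ?_⟩
  · exact (hp.int_mul k) s0
  · have h := Int.floor_le ((t - s0)/(2*π))
    rw [← hk] at h
    have := (le_div_iff₀ hπ).1 h
    linarith
  · have h := Int.lt_floor_add_one ((t - s0)/(2*π))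
    rw [← hk] at h
    have := (div_lt_iff₀ hπ).1 h
    push_cast at this ⊢
    nlinarith

lemma my_hasderiv (b : ℝ) (x g : ℝ → ℝ) (hx : ContDiff ℝ 1 x)
    (hbx : ∀ t, 0 < b + x t)
    (hode : ∀ t, deriv x t = g t * (b + x t)) (s : ℝ) :
    HasDerivAt (fun u => Real.log (b + x u)) (g s) s := by
  have hx' : HasDerivAt x (deriv x s) s :=
    ((hx.differentiable one_ne_zero) s).hasDerivAt
  have h1 : HasDerivAt (fun u => b + x u) (deriv x s) s := by
    exact hx'.const_add b
  have h2 := h1.log (ne_of_gt (hbx s))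
  have : deriv x s / (b + x s) = g s := by
    rw [hode s, mul_div_assoc, div_self (ne_of_gt (hbx s)), mul_one]
  rwa [this] at h2

lemma my_upper (b C : ℝ) (hb : 0 < b) (hC : 0 < C)
    (x g : ℝ → ℝ) (hx : ContDiff ℝ 1 x) (hg : Continuous g)
    (hbx : ∀ t, -b < x t)
    (hode : ∀ t, deriv x t = g t * (b + x t))
    (hgC : ∀ t, g t ≤ C)
    (t0 t : ℝ) (ht0 : x t0 = 0) (h1 : 0 ≤ t - t0) (h2 : t - t0 < 2*π) :
    x t < b * Real.exp (2*π*C) - b := by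
  have hpos : ∀ s, 0 < b + x s := fun s => by linarith [hbx s]
  have hint : (∫ s in t0..t, g s) = Real.log (b + x t) - Real.log (b + x t0) :=
    intervalIntegral.integral_eq_sub_of_hasDerivAt
      (fun s _ => my_hasderiv b x g hx hpos hode s) (hg.intervalIntegrable _ _)
  have hle : (∫ s in t0..t, g s) ≤ (t - t0) * C := by
    have h := intervalIntegral.integral_mono_on (by linarith : t0 ≤ t)
      (hg.intervalIntegrable _ _) (intervalIntegrable_const (μ := MeasureTheory.volume)) (fun s _ => hgC s)
    rwa [intervalIntegral.integral_const, smul_eq_mul] at h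
  rw [ht0, add_zero] at hint
  have hlt : Real.log (b + x t) < Real.log b + 2*π*C := by nlinarith
  have := Real.exp_lt_exp.2 hlt
  rw [Real.exp_add, Real.exp_log hb, Real.exp_log (hpos t)] at this
  linarith

lemma my_lower (b C : ℝ) (hb : 0 < b) (hC : 0 < C)
    (x g : ℝ → ℝ) (hx : ContDiff ℝ 1 x) (hg : Continuous g)
    (hbx : ∀ t, -b < x t)
    (hode : ∀ t, deriv x t = g t * (b + x t))
    (hgC : ∀ t, -C ≤ g t)
    (t0 t : ℝ) (ht0 : x t0 = 0) (h1 : 0 ≤ t - t0) (h2 : t - t0 < 2*π) :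
    b * Real.exp (-(2*π*C)) - b < x t := by
  have hpos : ∀ s, 0 < b + x s := fun s => by linarith [hbx s]
  have hint : (∫ s in t0..t, g s) = Real.log (b + x t) - Real.log (b + x t0) :=
    intervalIntegral.integral_eq_sub_of_hasDerivAt
      (fun s _ => my_hasderiv b x g hx hpos hode s) (hg.intervalIntegrable _ _)
  have hle : (t - t0) * (-C) ≤ (∫ s in t0..t, g s) := by
    have h := intervalIntegral.integral_mono_on (by linarith : t0 ≤ t)
      (intervalIntegrable_const (μ := MeasureTheory.volume)) (hg.intervalIntegrable _ _) (fun s _ => hgC s)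
    rwa [intervalIntegral.integral_const, smul_eq_mul] at h
  rw [ht0, add_zero] at hint
  have hlt : Real.log b + -(2*π*C) < Real.log (b + x t) := by nlinarith
  have := Real.exp_lt_exp.2 hlt
  rw [Real.exp_add, Real.exp_log hb, Real.exp_log (hpos t)] at this
  linarith

set_option maxHeartbeats 1600000 in
/-- A priori lower bounds for solutions of the parametrized system (PA). -/
theorem lotka_volterra_apriori_lower_bound
    (a11 a12 a21 a22 b1 b2 lam α τ : ℝ)
    (hA0 : 0 < a11 ∧ 0 < a12 ∧ 0 < a21 ∧ 0 < a22)
    (hb1 : 0 < b1) (hb2 : 0 < b2)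
    (hlam : 0 < lam) (hα : α ∈ Set.Icc (0:ℝ) 1) (hτ : 0 < τ)
    (x1 x2 : ℝ → ℝ) (hx1 : ContDiff ℝ 1 x1) (hx2 : ContDiff ℝ 1 x2)
    (hp1 : Function.Periodic x1 (2 * π)) (hp2 : Function.Periodic x2 (2 * π))
    (hm1 : (∫ t in (0:ℝ)..(2 * π), x1 t) = 0)
    (hm2 : (∫ t in (0:ℝ)..(2 * π), x2 t) = 0)
    (hb1' : ∀ t : ℝ, -b1 < x1 t) (hb2' : ∀ t : ℝ, -b2 < x2 t)
    (heq1 : ∀ t : ℝ, deriv x1 t =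
      -(α * lam) * (a11 * x1 (t - τ / lam) + a12 * x2 (t - τ / lam))
        * (b1 + x1 t))
    (heq2 : ∀ t : ℝ, deriv x2 t =
      -(α * lam) * (a21 * x1 (t - τ / lam) + a22 * x2 (t - τ / lam))
        * (b2 + x2 t))
    (d3 d4 : ℝ)
    (hd3 : d3 = b1 * Real.exp (2 * π * lam * (a11 * b1 + a12 * b2)) - b1)
    (hd4 : d4 = b2 * Real.exp (2 * π * lam * (a21 * b1 + a22 * b2)) - b2) :
    ∀ t : ℝ,
      (x1 t > b1 * Real.exp (-(2 * π * lam * (a11 * d3 + a12 * d4))) - b1 ∧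
        b1 * Real.exp (-(2 * π * lam * (a11 * d3 + a12 * d4))) - b1 > -b1) ∧
      (x2 t > b2 * Real.exp (-(2 * π * lam * (a21 * d3 + a22 * d4))) - b2 ∧
        b2 * Real.exp (-(2 * π * lam * (a21 * d3 + a22 * d4))) - b2 > -b2) := by
  obtain ⟨ha11, ha12, ha21, ha22⟩ := hA0
  obtain ⟨hα0, hα1⟩ := hα
  have hπ : (0:ℝ) < π := pi_pos
  obtain ⟨s1, hs1⟩ := my_exists_zero x1 hx1.continuous hm1
  obtain ⟨s2, hs2⟩ := my_exists_zero x2 hx2.continuous hm2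
  -- the shifted coefficient functions
  obtain ⟨g1, hg1def⟩ : ∃ g : ℝ → ℝ, g = fun t => -(α * lam) * (a11 * x1 (t - τ / lam) + a12 * x2 (t - τ / lam)) := ⟨_, rfl⟩
  obtain ⟨g2, hg2def⟩ : ∃ g : ℝ → ℝ, g = fun t => -(α * lam) * (a21 * x1 (t - τ / lam) + a22 * x2 (t - τ / lam)) := ⟨_, rfl⟩
  have hc1 : Continuous fun t : ℝ => x1 (t - τ / lam) :=
    hx1.continuous.comp (continuous_id.sub continuous_const)
  have hc2 : Continuous fun t : ℝ => x2 (t - τ / lam) :=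
    hx2.continuous.comp (continuous_id.sub continuous_const)
  have hg1c : Continuous g1 := by
    rw [hg1def]
    exact continuous_const.mul ((continuous_const.mul hc1).add (continuous_const.mul hc2))
  have hg2c : Continuous g2 := by
    rw [hg2def]
    exact continuous_const.mul ((continuous_const.mul hc1).add (continuous_const.mul hc2))
  have hode1 : ∀ t, deriv x1 t = g1 t * (b1 + x1 t) := by
    intro t; simp only [hg1def]; exact heq1 t
  have hode2 : ∀ t, deriv x2 t = g2 t * (b2 + x2 t) := by
    intro t; simp only [hg2def]; exact heq2 t
  -- Stage 1: upper bounds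
  have hS1 : (0:ℝ) < a11 * b1 + a12 * b2 := by positivity
  have hS2 : (0:ℝ) < a21 * b1 + a22 * b2 := by positivity
  have hgC1 : ∀ t, g1 t ≤ lam * (a11 * b1 + a12 * b2) := by
    intro t
    have hal : 0 ≤ α * lam := mul_nonneg hα0 hlam.le
    have hw : -(a11 * b1 + a12 * b2) ≤ a11 * x1 (t - τ / lam) + a12 * x2 (t - τ / lam) := by
      nlinarith [hb1' (t - τ / lam), hb2' (t - τ / lam)]
    have h1 : (α * lam) * (-(a11 * b1 + a12 * b2)) ≤ (α * lam) * (a11 * x1 (t - τ / lam) + a12 * x2 (t - τ / lam)) :=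
      mul_le_mul_of_nonneg_left hw hal
    have h2 : (α * lam) * (a11 * b1 + a12 * b2) ≤ lam * (a11 * b1 + a12 * b2) :=
      mul_le_mul_of_nonneg_right (by nlinarith : α * lam ≤ lam) hS1.le
    simp only [hg1def]
    nlinarith [h1, h2]
  have hgC2 : ∀ t, g2 t ≤ lam * (a21 * b1 + a22 * b2) := by
    intro t
    have hal : 0 ≤ α * lam := mul_nonneg hα0 hlam.le
    have hw : -(a21 * b1 + a22 * b2) ≤ a21 * x1 (t - τ / lam) + a22 * x2 (t - τ / lam) := by
      nlinarith [hb1' (t - τ / lam), hb2' (t - τ / lam)]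
    have h1 : (α * lam) * (-(a21 * b1 + a22 * b2)) ≤ (α * lam) * (a21 * x1 (t - τ / lam) + a22 * x2 (t - τ / lam)) :=
      mul_le_mul_of_nonneg_left hw hal
    have h2 : (α * lam) * (a21 * b1 + a22 * b2) ≤ lam * (a21 * b1 + a22 * b2) :=
      mul_le_mul_of_nonneg_right (by nlinarith : α * lam ≤ lam) hS2.le
    simp only [hg2def]
    nlinarith [h1, h2]
  have hu1 : ∀ s, x1 s < d3 := by
    intro s
    obtain ⟨t0, ht0, hA, hB⟩ := my_exists_near x1 hp1 s1 s
    have h := my_upper b1 (lam * (a11 * b1 + a12 * b2)) hb1 (mul_pos hlam hS1)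
      x1 g1 hx1 hg1c hb1' hode1 hgC1 t0 s (ht0.trans hs1) hA hB
    rw [hd3, show 2 * π * lam * (a11 * b1 + a12 * b2) = 2 * π * (lam * (a11 * b1 + a12 * b2)) from by ring]
    exact h
  have hu2 : ∀ s, x2 s < d4 := by
    intro s
    obtain ⟨t0, ht0, hA, hB⟩ := my_exists_near x2 hp2 s2 s
    have h := my_upper b2 (lam * (a21 * b1 + a22 * b2)) hb2 (mul_pos hlam hS2)
      x2 g2 hx2 hg2c hb2' hode2 hgC2 t0 s (ht0.trans hs2) hA hB
    rw [hd4, show 2 * π * lam * (a21 * b1 + a22 * b2) = 2 * π * (lam * (a21 * b1 + a22 * b2)) from by ring]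
    exact h
  -- d3, d4 positive
  have hd3pos : 0 < d3 := by
    have hp' : (0:ℝ) < 2 * π * lam * (a11 * b1 + a12 * b2) := by positivity
    rw [hd3]
    linarith [mul_le_mul_of_nonneg_left (Real.add_one_le_exp (2 * π * lam * (a11 * b1 + a12 * b2))) hb1.le, mul_pos hb1 hp']
  have hd4pos : 0 < d4 := by
    have hp' : (0:ℝ) < 2 * π * lam * (a21 * b1 + a22 * b2) := by positivity
    rw [hd4]
    linarith [mul_le_mul_of_nonneg_left (Real.add_one_le_exp (2 * π * lam * (a21 * b1 + a22 * b2))) hb2.le, mul_pos hb2 hp']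
  have hS3 : (0:ℝ) < a11 * d3 + a12 * d4 := by
    have := mul_pos ha11 hd3pos; have := mul_pos ha12 hd4pos; linarith
  have hS4 : (0:ℝ) < a21 * d3 + a22 * d4 := by
    have := mul_pos ha21 hd3pos; have := mul_pos ha22 hd4pos; linarith
  -- Stage 2: lower bounds on g
  have hgD1 : ∀ t, -(lam * (a11 * d3 + a12 * d4)) ≤ g1 t := by
    intro t
    have hal : 0 ≤ α * lam := mul_nonneg hα0 hlam.le
    have hw : a11 * x1 (t - τ / lam) + a12 * x2 (t - τ / lam) ≤ a11 * d3 + a12 * d4 := by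
      nlinarith [hu1 (t - τ / lam), hu2 (t - τ / lam)]
    have h1 : (α * lam) * (a11 * x1 (t - τ / lam) + a12 * x2 (t - τ / lam)) ≤ (α * lam) * (a11 * d3 + a12 * d4) :=
      mul_le_mul_of_nonneg_left hw hal
    have h2 : (α * lam) * (a11 * d3 + a12 * d4) ≤ lam * (a11 * d3 + a12 * d4) :=
      mul_le_mul_of_nonneg_right (by nlinarith : α * lam ≤ lam) hS3.le
    simp only [hg1def]
    nlinarith [h1, h2]
  have hgD2 : ∀ t, -(lam * (a21 * d3 + a22 * d4)) ≤ g2 t := by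
    intro t
    have hal : 0 ≤ α * lam := mul_nonneg hα0 hlam.le
    have hw : a21 * x1 (t - τ / lam) + a22 * x2 (t - τ / lam) ≤ a21 * d3 + a22 * d4 := by
      nlinarith [hu1 (t - τ / lam), hu2 (t - τ / lam)]
    have h1 : (α * lam) * (a21 * x1 (t - τ / lam) + a22 * x2 (t - τ / lam)) ≤ (α * lam) * (a21 * d3 + a22 * d4) :=
      mul_le_mul_of_nonneg_left hw hal
    have h2 : (α * lam) * (a21 * d3 + a22 * d4) ≤ lam * (a21 * d3 + a22 * d4) :=
      mul_le_mul_of_nonneg_right (by nlinarith : α * lam ≤ lam) hS4.le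
    simp only [hg2def]
    nlinarith [h1, h2]
  intro t
  refine ⟨⟨?_, ?_⟩, ⟨?_, ?_⟩⟩
  · obtain ⟨t0, ht0, hA, hB⟩ := my_exists_near x1 hp1 s1 t
    have h := my_lower b1 (lam * (a11 * d3 + a12 * d4)) hb1 (mul_pos hlam hS3)
      x1 g1 hx1 hg1c hb1' hode1 hgD1 t0 t (ht0.trans hs1) hA hB
    rw [show 2 * π * lam * (a11 * d3 + a12 * d4) = 2 * π * (lam * (a11 * d3 + a12 * d4)) from by ring]
    exact h
  · have := Real.exp_pos (-(2 * π * lam * (a11 * d3 + a12 * d4)))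
    nlinarith
  · obtain ⟨t0, ht0, hA, hB⟩ := my_exists_near x2 hp2 s2 t
    have h := my_lower b2 (lam * (a21 * d3 + a22 * d4)) hb2 (mul_pos hlam hS4)
      x2 g2 hx2 hg2c hb2' hode2 hgD2 t0 t (ht0.trans hs2) hA hB
    rw [show 2 * π * lam * (a21 * d3 + a22 * d4) = 2 * π * (lam * (a21 * d3 + a22 * d4)) from by ring]
    exact h
  · have := Real.exp_pos (-(2 * π * lam * (a21 * d3 + a22 * d4)))
    nlinarith
end

section
/- Assume (A0): aᵢⱼ > 0 for all i,j ∈ {1,2} and b₁, b₂ > 0. Fix 0 < λ₁ < λ₂ and τ ≥ 1. Then there exists m₀ > 0 such that for every λ ∈ [λ₁, λ₂], every α ∈ [0,1], and every pair x₁, x₂ : ℝ → ℝ of continuously differentiable 2π-periodic functions with zero mean over [0,2π], xᵢ(t) > −bᵢ for all t, satisfying x₁'(t) = −αλ(a₁₁x₁(t−τ/λ) + a₁₂x₂(t−τ/λ))(b₁ + x₁(t)) and x₂'(t) = −αλ(a₂₁x₁(t−τ/λ) + a₂₂x₂(t−τ/λ))(b₂ + x₂(t)) for all t, the derivatives x₁',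 x₂' are themselves differentiable and |xᵢ'(t)| < m₀ and |xᵢ''(t)| < m₀ for all t ∈ ℝ and i = 1,2. -/
open Real

lemma lv_exists_zero (f : ℝ → ℝ) (hf : Continuous f)
    (h : (∫ t in (0:ℝ)..(2*π), f t) = 0) : ∃ c, f c = 0 := by
  have hπ : (0:ℝ) < 2*π := by positivity
  obtain ⟨c, _, hc⟩ := exists_deriv_eq_zero (f := fun u => ∫ x in (0:ℝ)..u, f x) hπ
    (fun x _ => ((hf.integral_hasStrictDerivAt 0 x).hasDerivAt.continuousAt).continuousWithinAt)
    (by simp [h])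
  exact ⟨c, by rwa [(hf.integral_hasStrictDerivAt 0 c).hasDerivAt.deriv] at hc⟩

lemma lv_component_upper_bound (x : ℝ → ℝ) (b C : ℝ) (hb : 0 < b) (hC : 0 ≤ C)
    (hx : Differentiable ℝ x) (hper : Function.Periodic x (2*π))
    (hpos : ∀ t, 0 < b + x t) (t0 : ℝ) (hx0 : x t0 = 0)
    (hd : ∀ t, deriv x t ≤ C * (b + x t)) (t : ℝ) :
    b + x t ≤ b * Real.exp (2*π*C) := by
  have hπ : (0:ℝ) < 2*π := by positivity
  set u : ℝ → ℝ := fun s => Real.log (b + x s) - C * s with hu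
  have hud : ∀ s, HasDerivAt u (deriv x s / (b + x s) - C) s := by
    intro s
    have h1 : HasDerivAt (fun s => b + x s) (deriv x s) s := ((hx s).hasDerivAt).const_add b
    have h2 : HasDerivAt (fun s : ℝ => C * s) C s := by
      simpa using (hasDerivAt_id s).const_mul C
    exact (h1.log (hpos s).ne').sub h2
  have hanti : Antitone u := by
    apply antitone_of_deriv_nonpos (fun s => (hud s).differentiableAt)
    intro s
    rw [(hud s).deriv]
    have h2 := hpos s
    have : deriv x s / (b + x s) ≤ C := (div_le_iff₀ h2).2 (by linarith [hd s])
    linarith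
  obtain ⟨y, hy, hxy⟩ := hper.exists_mem_Ico hπ t t0
  have h1 : u y ≤ u t0 := hanti hy.1
  have h3 : Real.log (b + x y) ≤ Real.log b + C * (2*π) := by
    have hyt : y - t0 ≤ 2*π := by linarith [hy.2]
    have hy0 : 0 ≤ y - t0 := by linarith [hy.1]
    have : C * (y - t0) ≤ C * (2*π) := by nlinarith
    simp only [hu, hx0, add_zero] at h1
    linarith
  calc b + x t = b + x y := by rw [hxy]
    _ = Real.exp (Real.log (b + x y)) := (Real.exp_log (hpos y)).symm
    _ ≤ Real.exp (Real.log b + C*(2*π)) := Real.exp_le_exp.2 h3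
    _ = b * Real.exp (2*π*C) := by rw [Real.exp_add, Real.exp_log hb]; ring_nf

lemma lv_comb_abs (c1 c2 L B u v : ℝ) (h1 : 0 ≤ c1) (h2 : 0 ≤ c2) (hL : c1 + c2 ≤ L)
    (hB : 0 ≤ B) (hu : |u| ≤ B) (hv : |v| ≤ B) : |c1*u + c2*v| ≤ L*B := by
  calc |c1*u + c2*v| ≤ |c1*u| + |c2*v| := abs_add_le _ _
    _ = c1*|u| + c2*|v| := by rw [abs_mul, abs_mul, abs_of_nonneg h1, abs_of_nonneg h2]
    _ ≤ L*B := by nlinarith [mul_le_mul_of_nonneg_left hu h1, mul_le_mul_of_nonneg_left hv h2]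

set_option maxHeartbeats 2000000 in
/-- Uniform a priori bounds on first and second derivatives of solutions of
the parametrized system (PA), for parameters λ ∈ [λ₁,λ₂], α ∈ [0,1]. -/
theorem lotka_volterra_derivative_bounds
    (a11 a12 a21 a22 b1 b2 lam1 lam2 τ : ℝ)
    (hA0 : 0 < a11 ∧ 0 < a12 ∧ 0 < a21 ∧ 0 < a22)
    (hb1 : 0 < b1) (hb2 : 0 < b2)
    (hlam1 : 0 < lam1) (hlam12 : lam1 < lam2) (hτ : 1 ≤ τ) :
    ∃ m0 : ℝ, 0 < m0 ∧
      ∀ lam α : ℝ, lam ∈ Set.Icc lam1 lam2 → α ∈ Set.Icc (0:ℝ) 1 →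
      ∀ x1 x2 : ℝ → ℝ,
        ContDiff ℝ 1 x1 → ContDiff ℝ 1 x2 →
        Function.Periodic x1 (2 * π) → Function.Periodic x2 (2 * π) →
        (∫ t in (0:ℝ)..(2 * π), x1 t) = 0 →
        (∫ t in (0:ℝ)..(2 * π), x2 t) = 0 →
        (∀ t : ℝ, -b1 < x1 t) → (∀ t : ℝ, -b2 < x2 t) →
        (∀ t : ℝ, deriv x1 t =
          -(α * lam) * (a11 * x1 (t - τ / lam) + a12 * x2 (t - τ / lam))
            * (b1 + x1 t)) →
        (∀ t : ℝ, deriv x2 t =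
          -(α * lam) * (a21 * x1 (t - τ / lam) + a22 * x2 (t - τ / lam))
            * (b2 + x2 t)) →
        Differentiable ℝ (deriv x1) ∧ Differentiable ℝ (deriv x2) ∧
        ∀ t : ℝ,
          |deriv x1 t| < m0 ∧ |deriv x2 t| < m0 ∧
          |deriv (deriv x1) t| < m0 ∧ |deriv (deriv x2) t| < m0 := by
  obtain ⟨ha11, ha12, ha21, ha22⟩ := hA0
  have hlam2 : 0 < lam2 := hlam1.trans hlam12
  obtain ⟨C, hC⟩ : ∃ x : ℝ, x = lam2 * (a11*b1 + a12*b2 + a21*b1 + a22*b2) := ⟨_, rfl⟩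
  have hCpos : 0 < C := by rw [hC]; positivity
  obtain ⟨K, hK⟩ : ∃ x : ℝ, x = (b1 + b2) * Real.exp (2*π*C) := ⟨_, rfl⟩
  have hKpos : 0 < K := by rw [hK]; positivity
  obtain ⟨L, hL⟩ : ∃ x : ℝ, x = a11 + a12 + a21 + a22 := ⟨_, rfl⟩
  have hLpos : 0 < L := by rw [hL]; positivity
  obtain ⟨M1, hM1⟩ : ∃ x : ℝ, x = lam2 * (L*K) * ((b1+b2) + K) := ⟨_, rfl⟩
  have hM1pos : 0 < M1 := by rw [hM1]; positivity
  obtain ⟨M2, hM2⟩ : ∃ x : ℝ, x = lam2 * (L*M1) * ((b1+b2) + K) + lam2 * (L*K) * M1 := ⟨_, rfl⟩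
  have hM2pos : 0 < M2 := by rw [hM2]; positivity
  refine ⟨M1 + M2 + 1, by positivity, ?_⟩
  intro lam α hlam hα x1 x2 hx1 hx2 hp1 hp2 hi1 hi2 hb1x hb2x heq1 heq2
  have hx1d : Differentiable ℝ x1 := hx1.differentiable one_ne_zero
  have hx2d : Differentiable ℝ x2 := hx2.differentiable one_ne_zero
  have hlam0 : 0 < lam := lt_of_lt_of_le hlam1 hlam.1
  have hal0 : 0 ≤ α * lam := mul_nonneg hα.1 hlam0.le
  have hal2 : α * lam ≤ lam2 := by nlinarith [hα.2, hlam.2, hα.1]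
  set r := τ / lam with hr
  have hpos1 : ∀ t, 0 < b1 + x1 t := fun t => by linarith [hb1x t]
  have hpos2 : ∀ t, 0 < b2 + x2 t := fun t => by linarith [hb2x t]
  -- upper bounds on x1, x2
  obtain ⟨t01, ht01⟩ := lv_exists_zero x1 hx1.continuous hi1
  obtain ⟨t02, ht02⟩ := lv_exists_zero x2 hx2.continuous hi2
  have hub1 : ∀ t, b1 + x1 t ≤ b1 * Real.exp (2*π*C) := by
    refine lv_component_upper_bound x1 b1 C hb1 hCpos.le hx1d hp1 hpos1 t01 ht01 ?_
    intro t
    rw [heq1 t]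
    have hc1 : -(a11*b1 + a12*b2) < a11 * x1 (t - r) + a12 * x2 (t - r) := by
      nlinarith [hb1x (t - r), hb2x (t - r)]
    have h4 : -(α*lam) * (a11 * x1 (t-r) + a12 * x2 (t-r)) ≤ C := by
      have e1 : 0 ≤ (α*lam) * ((a11 * x1 (t-r) + a12 * x2 (t-r)) + (a11*b1 + a12*b2)) :=
        mul_nonneg hal0 (by linarith)
      have e2 : 0 ≤ (lam2 - α*lam) * (a11*b1 + a12*b2) :=
        mul_nonneg (by linarith) (by positivity)
      have e3 : 0 ≤ lam2 * (a21*b1 + a22*b2) := by positivity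
      linarith [e1, e2, e3, hC]
    exact mul_le_mul_of_nonneg_right h4 (hpos1 t).le
  have hub2 : ∀ t, b2 + x2 t ≤ b2 * Real.exp (2*π*C) := by
    refine lv_component_upper_bound x2 b2 C hb2 hCpos.le hx2d hp2 hpos2 t02 ht02 ?_
    intro t
    rw [heq2 t]
    have hc1 : -(a21*b1 + a22*b2) < a21 * x1 (t - r) + a22 * x2 (t - r) := by
      nlinarith [hb1x (t - r), hb2x (t - r)]
    have h4 : -(α*lam) * (a21 * x1 (t-r) + a22 * x2 (t-r)) ≤ C := by
      have e1 : 0 ≤ (α*lam) * ((a21 * x1 (t-r) + a22 * x2 (t-r)) + (a21*b1 + a22*b2)) :=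
        mul_nonneg hal0 (by linarith)
      have e2 : 0 ≤ (lam2 - α*lam) * (a21*b1 + a22*b2) :=
        mul_nonneg (by linarith) (by positivity)
      have e3 : 0 ≤ lam2 * (a11*b1 + a12*b2) := by positivity
      linarith [e1, e2, e3, hC]
    exact mul_le_mul_of_nonneg_right h4 (hpos2 t).le
  have hexp1 : (1:ℝ) ≤ Real.exp (2*π*C) := Real.one_le_exp (by positivity)
  have hb1K : b1 * Real.exp (2*π*C) ≤ K := by
    rw [hK]; nlinarith [mul_pos hb2 (Real.exp_pos (2*π*C)), mul_pos hb1 (Real.exp_pos (2*π*C))]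
  have hb2K : b2 * Real.exp (2*π*C) ≤ K := by
    rw [hK]; nlinarith [mul_pos hb2 (Real.exp_pos (2*π*C)), mul_pos hb1 (Real.exp_pos (2*π*C))]
  have hbsK : b1 + b2 ≤ K := by rw [hK]; nlinarith [hexp1, hb1, hb2]
  have hxb1 : ∀ t, |x1 t| ≤ K := by
    intro t
    rw [abs_le]
    exact ⟨by linarith [hb1x t], by linarith [hub1 t, hb1K]⟩
  have hxb2 : ∀ t, |x2 t| ≤ K := by
    intro t
    rw [abs_le]
    exact ⟨by linarith [hb2x t], by linarith [hub2 t, hb2K]⟩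
  have habs : |(-(α*lam))| ≤ lam2 := by rw [abs_neg, abs_of_nonneg hal0]; exact hal2
  have hcomb1 : ∀ s, |a11 * x1 s + a12 * x2 s| ≤ L * K := fun s =>
    lv_comb_abs a11 a12 L K _ _ ha11.le ha12.le (by rw [hL]; linarith) hKpos.le
      (hxb1 s) (hxb2 s)
  have hcomb2 : ∀ s, |a21 * x1 s + a22 * x2 s| ≤ L * K := fun s =>
    lv_comb_abs a21 a22 L K _ _ ha21.le ha22.le (by rw [hL]; linarith) hKpos.le
      (hxb1 s) (hxb2 s)
  have hbx1 : ∀ t, |b1 + x1 t| ≤ (b1 + b2) + K := by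
    intro t
    calc |b1 + x1 t| ≤ |b1| + |x1 t| := abs_add_le _ _
      _ ≤ (b1+b2)+K := by rw [abs_of_pos hb1]; linarith [hxb1 t]
  have hbx2 : ∀ t, |b2 + x2 t| ≤ (b1 + b2) + K := by
    intro t
    calc |b2 + x2 t| ≤ |b2| + |x2 t| := abs_add_le _ _
      _ ≤ (b1+b2)+K := by rw [abs_of_pos hb2]; linarith [hxb2 t]
  -- first derivative bounds
  have hd1 : ∀ t, |deriv x1 t| ≤ M1 := by
    intro t
    rw [heq1 t, abs_mul, abs_mul, hM1]
    exact mul_le_mul (mul_le_mul habs (hcomb1 (t - r)) (abs_nonneg _) hlam2.le)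
      (hbx1 t) (abs_nonneg _) (by positivity)
  have hd2 : ∀ t, |deriv x2 t| ≤ M1 := by
    intro t
    rw [heq2 t, abs_mul, abs_mul, hM1]
    exact mul_le_mul (mul_le_mul habs (hcomb2 (t - r)) (abs_nonneg _) hlam2.le)
      (hbx2 t) (abs_nonneg _) (by positivity)
  -- differentiability of deriv
  obtain ⟨g1, hg1def⟩ : ∃ g : ℝ → ℝ,
      g = fun s => -(α * lam) * (a11 * x1 (s - r) + a12 * x2 (s - r)) * (b1 + x1 s) := ⟨_, rfl⟩
  obtain ⟨g2, hg2def⟩ : ∃ g : ℝ → ℝ,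
      g = fun s => -(α * lam) * (a21 * x1 (s - r) + a22 * x2 (s - r)) * (b2 + x2 s) := ⟨_, rfl⟩
  have hdx1 : deriv x1 = g1 := by funext t; rw [hg1def]; exact heq1 t
  have hdx2 : deriv x2 = g2 := by funext t; rw [hg2def]; exact heq2 t
  have hshift1 : Differentiable ℝ (fun s => x1 (s - r)) :=
    hx1d.comp (differentiable_id.sub_const r)
  have hshift2 : Differentiable ℝ (fun s => x2 (s - r)) :=
    hx2d.comp (differentiable_id.sub_const r)
  have hg1diff : Differentiable ℝ g1 := by
    rw [hg1def]
    exact (((hshift1.const_mul a11).add (hshift2.const_mul a12)).const_mul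
      (-(α * lam))).mul (hx1d.const_add b1)
  have hg2diff : Differentiable ℝ g2 := by
    rw [hg2def]
    exact (((hshift1.const_mul a21).add (hshift2.const_mul a22)).const_mul
      (-(α * lam))).mul (hx2d.const_add b2)
  have hD1 : Differentiable ℝ (deriv x1) := by rw [hdx1]; exact hg1diff
  have hD2 : Differentiable ℝ (deriv x2) := by rw [hdx2]; exact hg2diff
  -- second derivatives
  have hA1 : ∀ t, HasDerivAt (fun s => x1 (s - r)) (deriv x1 (t - r)) t := by
    intro t
    have h := ((hx1d (t - r)).hasDerivAt).comp t ((hasDerivAt_id t).sub_const r)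
    simpa [Function.comp_def] using h
  have hA2 : ∀ t, HasDerivAt (fun s => x2 (s - r)) (deriv x2 (t - r)) t := by
    intro t
    have h := ((hx2d (t - r)).hasDerivAt).comp t ((hasDerivAt_id t).sub_const r)
    simpa [Function.comp_def] using h
  have hderiv2_1 : ∀ t, deriv (deriv x1) t =
      -(α*lam) * (a11 * deriv x1 (t - r) + a12 * deriv x2 (t - r)) * (b1 + x1 t)
        + -(α*lam) * (a11 * x1 (t - r) + a12 * x2 (t - r)) * deriv x1 t := by
    intro t
    have hprod : HasDerivAt g1
        (-(α*lam) * (a11 * deriv x1 (t - r) + a12 * deriv x2 (t - r)) * (b1 + x1 t)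
          + -(α*lam) * (a11 * x1 (t - r) + a12 * x2 (t - r)) * deriv x1 t) t := by
      rw [hg1def]
      exact ((((hA1 t).const_mul a11).add ((hA2 t).const_mul a12)).const_mul
        (-(α*lam))).mul (((hx1d t).hasDerivAt).const_add b1)
    have e0 : deriv (deriv x1) t = deriv g1 t := by rw [hdx1]
    rw [e0, hprod.deriv]
  have hderiv2_2 : ∀ t, deriv (deriv x2) t =
      -(α*lam) * (a21 * deriv x1 (t - r) + a22 * deriv x2 (t - r)) * (b2 + x2 t)
        + -(α*lam) * (a21 * x1 (t - r) + a22 * x2 (t - r)) * deriv x2 t := by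
    intro t
    have hprod : HasDerivAt g2
        (-(α*lam) * (a21 * deriv x1 (t - r) + a22 * deriv x2 (t - r)) * (b2 + x2 t)
          + -(α*lam) * (a21 * x1 (t - r) + a22 * x2 (t - r)) * deriv x2 t) t := by
      rw [hg2def]
      exact ((((hA1 t).const_mul a21).add ((hA2 t).const_mul a22)).const_mul
        (-(α*lam))).mul (((hx2d t).hasDerivAt).const_add b2)
    have e0 : deriv (deriv x2) t = deriv g2 t := by rw [hdx2]
    rw [e0, hprod.deriv]
  have hcombd1 : ∀ s, |a11 * deriv x1 s + a12 * deriv x2 s| ≤ L * M1 := fun s =>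
    lv_comb_abs a11 a12 L M1 _ _ ha11.le ha12.le (by rw [hL]; linarith) hM1pos.le
      (hd1 s) (hd2 s)
  have hcombd2 : ∀ s, |a21 * deriv x1 s + a22 * deriv x2 s| ≤ L * M1 := fun s =>
    lv_comb_abs a21 a22 L M1 _ _ ha21.le ha22.le (by rw [hL]; linarith) hM1pos.le
      (hd1 s) (hd2 s)
  have hdd1 : ∀ t, |deriv (deriv x1) t| ≤ M2 := by
    intro t
    rw [hderiv2_1 t, hM2]
    calc |-(α*lam) * (a11 * deriv x1 (t - r) + a12 * deriv x2 (t - r)) * (b1 + x1 t)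
          + -(α*lam) * (a11 * x1 (t - r) + a12 * x2 (t - r)) * deriv x1 t|
        ≤ |-(α*lam) * (a11 * deriv x1 (t - r) + a12 * deriv x2 (t - r)) * (b1 + x1 t)|
          + |-(α*lam) * (a11 * x1 (t - r) + a12 * x2 (t - r)) * deriv x1 t| := abs_add_le _ _
      _ ≤ lam2 * (L*M1) * ((b1+b2) + K) + lam2 * (L*K) * M1 := by
          gcongr ?_ + ?_
          · rw [abs_mul, abs_mul]
            exact mul_le_mul (mul_le_mul habs (hcombd1 (t - r)) (abs_nonneg _) hlam2.le)
              (hbx1 t) (abs_nonneg _) (by positivity)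
          · rw [abs_mul, abs_mul]
            exact mul_le_mul (mul_le_mul habs (hcomb1 (t - r)) (abs_nonneg _) hlam2.le)
              (hd1 t) (abs_nonneg _) (by positivity)
  have hdd2 : ∀ t, |deriv (deriv x2) t| ≤ M2 := by
    intro t
    rw [hderiv2_2 t, hM2]
    calc |-(α*lam) * (a21 * deriv x1 (t - r) + a22 * deriv x2 (t - r)) * (b2 + x2 t)
          + -(α*lam) * (a21 * x1 (t - r) + a22 * x2 (t - r)) * deriv x2 t|
        ≤ |-(α*lam) * (a21 * deriv x1 (t - r) + a22 * deriv x2 (t - r)) * (b2 + x2 t)|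
          + |-(α*lam) * (a21 * x1 (t - r) + a22 * x2 (t - r)) * deriv x2 t| := abs_add_le _ _
      _ ≤ lam2 * (L*M1) * ((b1+b2) + K) + lam2 * (L*K) * M1 := by
          gcongr ?_ + ?_
          · rw [abs_mul, abs_mul]
            exact mul_le_mul (mul_le_mul habs (hcombd2 (t - r)) (abs_nonneg _) hlam2.le)
              (hbx2 t) (abs_nonneg _) (by positivity)
          · rw [abs_mul, abs_mul]
            exact mul_le_mul (mul_le_mul habs (hcomb2 (t - r)) (abs_nonneg _) hlam2.le)
              (hd2 t) (abs_nonneg _) (by positivity)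
  refine ⟨hD1, hD2, fun t => ⟨?_, ?_, ?_, ?_⟩⟩
  · exact lt_of_le_of_lt (hd1 t) (by linarith)
  · exact lt_of_le_of_lt (hd2 t) (by linarith)
  · exact lt_of_le_of_lt (hdd1 t) (by linarith)
  · exact lt_of_le_of_lt (hdd2 t) (by linarith)
end

section
/- Assume (A0): aᵢⱼ > 0 for all i,j ∈ {1,2} and b₁, b₂ > 0. Fix 0 < λ₁ < λ₂ and τ ≥ 1. Then there exists α₀ ∈ (0,1) such that for every α ∈ [0, α₀] and every λ ∈ [λ₁, λ₂], the only pair x₁, x₂ : ℝ → ℝ of continuously differentiable 2π-periodic functions with zero mean over [0,2π], xᵢ(t) > −bᵢ for all t, satisfying x₁'(t) = −αλ(a₁₁x₁(t−τ/λ) + a₁₂x₂(t−τ/λ))(b₁ + x₁(t)) and x₂'(t) = −αλ(a₂₁x₁(t−τ/λ) + a₂₂x₂(t−τ/λ))(b₂ + x₂(t)) for all t, is the trivial pair x₁ ≡ x₂ ≡ 0. -/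
open Real

/-- Mean value: a continuous function with zero integral has a zero. -/
lemma lv_exists_zero_of_integral_zero {f : ℝ → ℝ} {a b : ℝ} (hab : a < b)
    (hf : Continuous f) (hint : (∫ t in a..b, f t) = 0) :
    ∃ c ∈ Set.Icc a b, f c = 0 := by
  by_contra hc
  push_neg at hc
  have key : (∀ x ∈ Set.Icc a b, 0 < f x) ∨ (∀ x ∈ Set.Icc a b, f x < 0) := by
    have ha : a ∈ Set.Icc a b := ⟨le_rfl, hab.le⟩
    rcases (hc a ha).lt_or_gt with h | h
    · right
      intro x hx
      by_contra hfx
      push_neg at hfx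
      have hfx' : 0 < f x := (hc x hx).symm.lt_of_le hfx
      have : (0:ℝ) ∈ Set.Icc (f a) (f x) := ⟨h.le, hfx'.le⟩
      obtain ⟨c, hcmem, hcf⟩ := intermediate_value_Icc hx.1 (hf.continuousOn) this
      exact hc c ⟨hcmem.1, hcmem.2.trans hx.2⟩ hcf
    · left
      intro x hx
      by_contra hfx
      push_neg at hfx
      have hfx' : f x < 0 := lt_of_le_of_ne hfx (hc x hx)
      have : (0:ℝ) ∈ Set.Icc (f x) (f a) := ⟨hfx'.le, h.le⟩
      obtain ⟨c, hcmem, hcf⟩ := intermediate_value_Icc' hx.1 (hf.continuousOn) this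
      exact hc c ⟨hcmem.1, hcmem.2.trans hx.2⟩ hcf
  rcases key with h | h
  · have := intervalIntegral.intervalIntegral_pos_of_pos_on
      (hf.intervalIntegrable a b) (fun x hx => h x ⟨hx.1.le, hx.2.le⟩) hab
    rw [hint] at this; exact lt_irrefl 0 this
  · have := intervalIntegral.intervalIntegral_pos_of_pos_on
      ((hf.neg).intervalIntegrable a b) (fun x hx => by
        simpa using (h x ⟨hx.1.le, hx.2.le⟩)) hab
    simp only [Pi.neg_apply] at this
    rw [intervalIntegral.integral_neg, hint, neg_zero] at this
    exact lt_irrefl 0 this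

/-- Any point can be translated into a fixed period window. -/
lemma lv_periodic_reduce {f : ℝ → ℝ} {T : ℝ} (hT : 0 < T)
    (hf : Function.Periodic f T) (t0 t : ℝ) :
    ∃ s ∈ Set.Icc t0 (t0 + T), f t = f s := by
  refine ⟨t - ⌊(t - t0)/T⌋ * T, ⟨?_, ?_⟩, (hf.sub_int_mul_eq _).symm⟩
  · have h := Int.sub_floor_div_mul_nonneg (t - t0) hT
    linarith
  · have h := Int.sub_floor_div_mul_lt (t - t0) hT
    linarith

/-- The key a priori estimate for one scalar delay-logistic type equation. -/
lemma lv_key_bound (b β B G : ℝ) (x g : ℝ → ℝ)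
    (hb : 0 < b) (hβ : 0 ≤ β) (hB : 0 ≤ B) (hG : 0 ≤ G)
    (hx : ContDiff ℝ 1 x) (hg : Continuous g)
    (hxp : Function.Periodic x (2*π)) (hgp : Function.Periodic g (2*π))
    (hxmean : (∫ t in (0:ℝ)..(2*π), x t) = 0)
    (hgmean : (∫ t in (0:ℝ)..(2*π), g t) = 0)
    (hxlb : ∀ t, -b < x t)
    (hglb : ∀ t, -B ≤ g t)
    (hgub : ∀ t, |g t| ≤ G)
    (hode : ∀ t, deriv x t = -β * g t * (b + x t))
    (hsmall : β * (2*π*B) ≤ 1) :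
    ∀ t, |x t| ≤ b * (2 * (β * (2*π*G))) := by
  have hπ : 0 < π := pi_pos
  have h2π : (0:ℝ) < 2*π := by linarith
  have hxc : Continuous x := hx.continuous
  obtain ⟨t0, ht0mem, ht0⟩ := lv_exists_zero_of_integral_zero h2π hxc hxmean
  have hpos : ∀ t, 0 < b + x t := fun t => by have := hxlb t; linarith
  set u : ℝ → ℝ := fun t => log (b + x t) with hu_def
  have hx' : ∀ t, HasDerivAt x (deriv x t) t :=
    fun t => ((hx.differentiable one_ne_zero) t).hasDerivAt
  have hu : ∀ t, HasDerivAt u (-β * g t) t := by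
    intro t
    have h1 : HasDerivAt (fun s => b + x s) (deriv x t) t := by
      exact (hx' t).const_add b
    have h2 := (h1.log (hpos t).ne')
    have : deriv x t / (b + x t) = -β * g t := by
      rw [hode t, mul_div_assoc, div_self (hpos t).ne', mul_one]
    rwa [this] at h2
  have hderiv_cont : Continuous (fun t => -β * g t) := continuous_const.mul hg
  have hftc : ∀ s, u s - u t0 = -β * ∫ σ in t0..s, g σ := by
    intro s
    rw [← intervalIntegral.integral_eq_sub_of_hasDerivAt
      (fun σ _ => hu σ) (hderiv_cont.intervalIntegrable _ _)]
    rw [← intervalIntegral.integral_const_mul]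
  have hgmean' : (∫ σ in t0..t0 + 2*π, g σ) = 0 := by
    have := hgp.intervalIntegral_add_eq t0 0
    rwa [zero_add, hgmean] at this
  have hint_bound : ∀ s ∈ Set.Icc t0 (t0 + 2*π),
      |∫ σ in t0..s, g σ| ≤ 2*π*B ∧ |∫ σ in t0..s, g σ| ≤ 2*π*G := by
    intro s hs
    have hgi : ∀ a c : ℝ, IntervalIntegrable g MeasureTheory.volume a c :=
      fun a c => hg.intervalIntegrable a c
    have hlb1 : -((s - t0) * B) ≤ ∫ σ in t0..s, g σ := by
      have : (∫ σ in t0..s, (-B : ℝ)) ≤ ∫ σ in t0..s, g σ :=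
        intervalIntegral.integral_mono_on hs.1
          (intervalIntegrable_const) (hgi t0 s) (fun σ _ => hglb σ)
      simpa [mul_comm] using this
    have hsplit : (∫ σ in t0..s, g σ) + (∫ σ in s..t0 + 2*π, g σ) = 0 := by
      rw [intervalIntegral.integral_add_adjacent_intervals (hgi t0 s) (hgi s _), hgmean']
    have hlb2 : -((t0 + 2*π - s) * B) ≤ ∫ σ in s..t0 + 2*π, g σ := by
      have : (∫ σ in s..t0 + 2*π, (-B : ℝ)) ≤ ∫ σ in s..t0 + 2*π, g σ :=
        intervalIntegral.integral_mono_on hs.2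
          (intervalIntegrable_const) (hgi s _) (fun σ _ => hglb σ)
      simpa [mul_comm] using this
    have hub : (∫ σ in t0..s, g σ) ≤ (t0 + 2*π - s) * B := by
      nlinarith [hlb2, hsplit]
    constructor
    · rw [abs_le]
      constructor
      · have h1 : s - t0 ≤ 2*π := by have := hs.2; linarith
        have : -((s - t0) * B) ≥ -(2*π*B) := by nlinarith
        linarith [hlb1]
      · have h1 : t0 + 2*π - s ≤ 2*π := by have := hs.1; linarith
        have : (t0 + 2*π - s) * B ≤ 2*π*B := by nlinarith
        linarith [hub]
    · have hnorm := intervalIntegral.norm_integral_le_of_norm_le_const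
        (C := G) (f := g) (a := t0) (b := s) (fun σ _ => by
          rw [Real.norm_eq_abs]; exact hgub σ)
      rw [Real.norm_eq_abs] at hnorm
      have : |s - t0| ≤ 2*π := by
        rw [abs_le]; constructor <;> [linarith [hs.1, hs.2]; linarith [hs.2]]
      calc |∫ σ in t0..s, g σ| ≤ G * |s - t0| := hnorm
        _ ≤ G * (2*π) := by nlinarith
        _ = 2*π*G := by ring
  have hwin : ∀ s ∈ Set.Icc t0 (t0 + 2*π), |x s| ≤ b * (2 * (β * (2*π*G))) := by
    intro s hs
    obtain ⟨hIB, hIG⟩ := hint_bound s hs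
    set I := ∫ σ in t0..s, g σ
    have hw : u s - u t0 = -β * I := hftc s
    set w := u s - u t0 with hwdef
    have hwB : |w| ≤ 1 := by
      rw [hw, abs_mul, abs_neg, abs_of_nonneg hβ]
      calc β * |I| ≤ β * (2*π*B) := by nlinarith
        _ ≤ 1 := hsmall
    have hwG : |w| ≤ β * (2*π*G) := by
      rw [hw, abs_mul, abs_neg, abs_of_nonneg hβ]
      nlinarith
    have hut0 : u t0 = log b := by simp [hu_def, ht0]
    have hxs : b + x s = b * exp w := by
      have h1 : b + x s = exp (u s) := (exp_log (hpos s)).symm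
      have h2 : u s = log b + w := by rw [hwdef, hut0]; ring
      rw [h1, h2, exp_add, exp_log hb]
    have : x s = b * (exp w - 1) := by rw [mul_sub, ← hxs]; ring
    rw [this, abs_mul, abs_of_pos hb]
    have := Real.abs_exp_sub_one_le hwB
    calc b * |exp w - 1| ≤ b * (2 * |w|) := by nlinarith
      _ ≤ b * (2 * (β * (2*π*G))) := by nlinarith
  intro t
  obtain ⟨s, hsmem, hts⟩ := lv_periodic_reduce h2π hxp t0 t
  rw [hts]
  exact hwin s hsmem

set_option maxHeartbeats 1000000 in
/-- For α small enough, the parametrized system (PA) has only the trivial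
periodic solution. -/
theorem lotka_volterra_small_alpha_trivial
    (a11 a12 a21 a22 b1 b2 lam1 lam2 τ : ℝ)
    (hA0 : 0 < a11 ∧ 0 < a12 ∧ 0 < a21 ∧ 0 < a22)
    (hb1 : 0 < b1) (hb2 : 0 < b2)
    (hlam1 : 0 < lam1) (hlam12 : lam1 < lam2) (hτ : 1 ≤ τ) :
    ∃ α0 : ℝ, α0 ∈ Set.Ioo (0:ℝ) 1 ∧
      ∀ α : ℝ, α ∈ Set.Icc 0 α0 →
      ∀ lam : ℝ, lam ∈ Set.Icc lam1 lam2 →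
      ∀ x1 x2 : ℝ → ℝ,
        ContDiff ℝ 1 x1 → ContDiff ℝ 1 x2 →
        Function.Periodic x1 (2 * π) → Function.Periodic x2 (2 * π) →
        (∫ t in (0:ℝ)..(2 * π), x1 t) = 0 →
        (∫ t in (0:ℝ)..(2 * π), x2 t) = 0 →
        (∀ t : ℝ, -b1 < x1 t) → (∀ t : ℝ, -b2 < x2 t) →
        (∀ t : ℝ, deriv x1 t =
          -(α * lam) * (a11 * x1 (t - τ / lam) + a12 * x2 (t - τ / lam))
            * (b1 + x1 t)) →
        (∀ t : ℝ, deriv x2 t =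
          -(α * lam) * (a21 * x1 (t - τ / lam) + a22 * x2 (t - τ / lam))
            * (b2 + x2 t)) →
        ∀ t : ℝ, x1 t = 0 ∧ x2 t = 0 := by
  obtain ⟨ha11, ha12, ha21, ha22⟩ := hA0
  have hπ : 0 < π := pi_pos
  have h2π : (0:ℝ) < 2*π := by linarith
  have hlam2 : 0 < lam2 := hlam1.trans hlam12
  set D : ℝ := (b1+b2)*(a11+a12+a21+a22) + (a11*b1+a12*b2) + (a21*b1+a22*b2) + 1 with hD_def
  have hD1 : 1 ≤ D := by
    rw [hD_def]
    nlinarith [mul_pos (by linarith : (0:ℝ) < b1+b2) (by linarith : (0:ℝ) < a11+a12+a21+a22),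
      mul_pos ha11 hb1, mul_pos ha12 hb2, mul_pos ha21 hb1, mul_pos ha22 hb2]
  have hD0 : 0 < D := by linarith
  have h8π : (0:ℝ) < 8*π := by positivity
  have hXpos : (0:ℝ) < 8*π*lam2*D := mul_pos (mul_pos h8π hlam2) hD0
  refine ⟨min (1/2) (1/(8*π*lam2*D)), ⟨lt_min (by norm_num) (div_pos one_pos hXpos), ?_⟩, ?_⟩
  · exact lt_of_le_of_lt (min_le_left _ _) (by norm_num)
  intro α hα lam hlam x1 x2 hx1 hx2 hx1p hx2p hm1 hm2 hlb1 hlb2 hode1 hode2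
  have hα0 : 0 ≤ α := hα.1
  have hlamp : 0 < lam := lt_of_lt_of_le hlam1 hlam.1
  have hβ0 : 0 ≤ α * lam := mul_nonneg hα0 hlamp.le
  -- smallness of β := α * lam
  have hβsmall : (α * lam) * (8*π*D) ≤ 1 := by
    have h1 : α ≤ 1/(8*π*lam2*D) := hα.2.trans (min_le_right _ _)
    have h2 : α * (8*π*lam2*D) ≤ 1 := by
      rw [← le_div_iff₀ hXpos]; exact h1
    have h3 : α * lam ≤ α * lam2 := mul_le_mul_of_nonneg_left hlam.2 hα0
    have h4 : (α*lam)*(8*π*D) ≤ (α*lam2)*(8*π*D) :=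
      mul_le_mul_of_nonneg_right h3 (le_of_lt (mul_pos h8π hD0))
    have h5 : (α*lam2)*(8*π*D) = α * (8*π*lam2*D) := by ring
    linarith
  -- continuity of the delayed combinations
  have hx1c : Continuous x1 := hx1.continuous
  have hx2c : Continuous x2 := hx2.continuous
  have hg1c : Continuous (fun t => a11 * x1 (t - τ/lam) + a12 * x2 (t - τ/lam)) :=
    (continuous_const.mul (hx1c.comp (continuous_sub_right _))).add
      (continuous_const.mul (hx2c.comp (continuous_sub_right _)))
  have hg2c : Continuous (fun t => a21 * x1 (t - τ/lam) + a22 * x2 (t - τ/lam)) :=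
    (continuous_const.mul (hx1c.comp (continuous_sub_right _))).add
      (continuous_const.mul (hx2c.comp (continuous_sub_right _)))
  -- periodicity of the delayed combinations
  have hper : ∀ c1 c2 : ℝ, Function.Periodic
      (fun t => c1 * x1 (t - τ/lam) + c2 * x2 (t - τ/lam)) (2*π) := by
    intro c1 c2 t
    have e1 : t + 2*π - τ/lam = (t - τ/lam) + 2*π := by ring
    simp only [e1, hx1p (t - τ/lam), hx2p (t - τ/lam)]
  -- zero mean of the delayed combinations
  have hshift : ∀ f : ℝ → ℝ, Continuous f → Function.Periodic f (2*π) →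
      (∫ t in (0:ℝ)..(2*π), f t) = 0 →
      (∫ t in (0:ℝ)..(2*π), f (t - τ/lam)) = 0 := by
    intro f hf hfp hfm
    rw [intervalIntegral.integral_comp_sub_right]
    have h0 : (0:ℝ) - τ/lam = -(τ/lam) := by ring
    have h1 : 2*π - τ/lam = -(τ/lam) + 2*π := by ring
    have h2 := hfp.intervalIntegral_add_eq (-(τ/lam)) 0
    rw [zero_add] at h2
    rw [h0, h1, h2, hfm]
  have hmean : ∀ c1 c2 : ℝ,
      (∫ t in (0:ℝ)..(2*π), (c1 * x1 (t - τ/lam) + c2 * x2 (t - τ/lam))) = 0 := by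
    intro c1 c2
    have hi1 : IntervalIntegrable (fun t => c1 * x1 (t - τ/lam))
        MeasureTheory.volume 0 (2*π) :=
      (continuous_const.mul (hx1c.comp (continuous_sub_right _))).intervalIntegrable _ _
    have hi2 : IntervalIntegrable (fun t => c2 * x2 (t - τ/lam))
        MeasureTheory.volume 0 (2*π) :=
      (continuous_const.mul (hx2c.comp (continuous_sub_right _))).intervalIntegrable _ _
    rw [intervalIntegral.integral_add hi1 hi2,
      intervalIntegral.integral_const_mul, intervalIntegral.integral_const_mul,
      hshift x1 hx1c hx1p hm1, hshift x2 hx2c hx2p hm2]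
    ring
  -- lower bounds on the delayed combinations
  have hglb1 : ∀ t, -(a11*b1+a12*b2) ≤ a11 * x1 (t - τ/lam) + a12 * x2 (t - τ/lam) := by
    intro t
    have h1 := mul_le_mul_of_nonneg_left (hlb1 (t - τ/lam)).le ha11.le
    have h2 := mul_le_mul_of_nonneg_left (hlb2 (t - τ/lam)).le ha12.le
    nlinarith
  have hglb2 : ∀ t, -(a21*b1+a22*b2) ≤ a21 * x1 (t - τ/lam) + a22 * x2 (t - τ/lam) := by
    intro t
    have h1 := mul_le_mul_of_nonneg_left (hlb1 (t - τ/lam)).le ha21.le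
    have h2 := mul_le_mul_of_nonneg_left (hlb2 (t - τ/lam)).le ha22.le
    nlinarith
  -- smallness conditions for the two equations
  have hsmall1 : (α * lam) * (2*π*(a11*b1+a12*b2)) ≤ 1 := by
    have hBD : a11*b1+a12*b2 ≤ D := by
      rw [hD_def]
      nlinarith [mul_pos (by linarith : (0:ℝ) < b1+b2) (by linarith : (0:ℝ) < a11+a12+a21+a22),
        mul_pos ha21 hb1, mul_pos ha22 hb2]
    have : 2*π*(a11*b1+a12*b2) ≤ 8*π*D := by
      have h1 := mul_le_mul_of_nonneg_left hBD (by positivity : (0:ℝ) ≤ 2*π)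
      have h2 : (0:ℝ) < π * D := mul_pos hπ hD0
      linarith
    calc (α * lam) * (2*π*(a11*b1+a12*b2)) ≤ (α * lam) * (8*π*D) :=
          mul_le_mul_of_nonneg_left this hβ0
      _ ≤ 1 := hβsmall
  have hsmall2 : (α * lam) * (2*π*(a21*b1+a22*b2)) ≤ 1 := by
    have hBD : a21*b1+a22*b2 ≤ D := by
      rw [hD_def]
      nlinarith [mul_pos (by linarith : (0:ℝ) < b1+b2) (by linarith : (0:ℝ) < a11+a12+a21+a22),
        mul_pos ha11 hb1, mul_pos ha12 hb2]
    have : 2*π*(a21*b1+a22*b2) ≤ 8*π*D := by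
      have h1 := mul_le_mul_of_nonneg_left hBD (by positivity : (0:ℝ) ≤ 2*π)
      have h2 : (0:ℝ) < π * D := mul_pos hπ hD0
      linarith
    calc (α * lam) * (2*π*(a21*b1+a22*b2)) ≤ (α * lam) * (8*π*D) :=
          mul_le_mul_of_nonneg_left this hβ0
      _ ≤ 1 := hβsmall
  -- the contraction step
  have step : ∀ S : ℝ, 0 ≤ S → (∀ t, |x1 t| ≤ S ∧ |x2 t| ≤ S) →
      ∀ t, |x1 t| ≤ S/2 ∧ |x2 t| ≤ S/2 := by
    intro S hS hSb t
    have hgub1 : ∀ s, |a11 * x1 (s - τ/lam) + a12 * x2 (s - τ/lam)| ≤ (a11+a12)*S := by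
      intro s
      have h1 := (hSb (s - τ/lam)).1
      have h2 := (hSb (s - τ/lam)).2
      calc |a11 * x1 (s - τ/lam) + a12 * x2 (s - τ/lam)|
          ≤ |a11 * x1 (s - τ/lam)| + |a12 * x2 (s - τ/lam)| := abs_add_le _ _
        _ = a11 * |x1 (s - τ/lam)| + a12 * |x2 (s - τ/lam)| := by
            rw [abs_mul, abs_mul, abs_of_pos ha11, abs_of_pos ha12]
        _ ≤ (a11+a12)*S := by nlinarith
    have hgub2 : ∀ s, |a21 * x1 (s - τ/lam) + a22 * x2 (s - τ/lam)| ≤ (a21+a22)*S := by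
      intro s
      have h1 := (hSb (s - τ/lam)).1
      have h2 := (hSb (s - τ/lam)).2
      calc |a21 * x1 (s - τ/lam) + a22 * x2 (s - τ/lam)|
          ≤ |a21 * x1 (s - τ/lam)| + |a22 * x2 (s - τ/lam)| := abs_add_le _ _
        _ = a21 * |x1 (s - τ/lam)| + a22 * |x2 (s - τ/lam)| := by
            rw [abs_mul, abs_mul, abs_of_pos ha21, abs_of_pos ha22]
        _ ≤ (a21+a22)*S := by nlinarith
    have e1 := lv_key_bound b1 (α*lam) (a11*b1+a12*b2) ((a11+a12)*S) x1
      (fun s => a11 * x1 (s - τ/lam) + a12 * x2 (s - τ/lam))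
      hb1 hβ0 (by nlinarith [mul_pos ha11 hb1, mul_pos ha12 hb2])
      (mul_nonneg (by linarith) hS) hx1 hg1c hx1p (hper a11 a12)
      hm1 (hmean a11 a12) hlb1 hglb1 hgub1 (fun s => hode1 s) hsmall1 t
    have e2 := lv_key_bound b2 (α*lam) (a21*b1+a22*b2) ((a21+a22)*S) x2
      (fun s => a21 * x1 (s - τ/lam) + a22 * x2 (s - τ/lam))
      hb2 hβ0 (by nlinarith [mul_pos ha21 hb1, mul_pos ha22 hb2])
      (mul_nonneg (by linarith) hS) hx2 hg2c hx2p (hper a21 a22)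
      hm2 (hmean a21 a22) hlb2 hglb2 hgub2 (fun s => hode2 s) hsmall2 t
    have hc1 : (α*lam) * (4*π*(b1*(a11+a12))) ≤ 1/2 := by
      have hd : b1*(a11+a12) ≤ D := by
        rw [hD_def]
        nlinarith [mul_pos hb1 (by linarith : (0:ℝ) < a21+a22),
          mul_pos hb2 (by linarith : (0:ℝ) < a11+a12+a21+a22),
          mul_pos ha11 hb1, mul_pos ha12 hb2, mul_pos ha21 hb1, mul_pos ha22 hb2]
      have h1 : (α*lam) * (4*π*(b1*(a11+a12))) ≤ (α*lam) * (4*π*D) := by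
        have := mul_le_mul_of_nonneg_left hd (by positivity : (0:ℝ) ≤ 4*π)
        exact mul_le_mul_of_nonneg_left this hβ0
      have h2 : (α*lam) * (4*π*D) = ((α*lam) * (8*π*D))/2 := by ring
      linarith
    have hc2 : (α*lam) * (4*π*(b2*(a21+a22))) ≤ 1/2 := by
      have hd : b2*(a21+a22) ≤ D := by
        rw [hD_def]
        nlinarith [mul_pos hb2 (by linarith : (0:ℝ) < a11+a12),
          mul_pos hb1 (by linarith : (0:ℝ) < a11+a12+a21+a22),
          mul_pos ha11 hb1, mul_pos ha12 hb2, mul_pos ha21 hb1, mul_pos ha22 hb2]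
      have h1 : (α*lam) * (4*π*(b2*(a21+a22))) ≤ (α*lam) * (4*π*D) := by
        have := mul_le_mul_of_nonneg_left hd (by positivity : (0:ℝ) ≤ 4*π)
        exact mul_le_mul_of_nonneg_left this hβ0
      have h2 : (α*lam) * (4*π*D) = ((α*lam) * (8*π*D))/2 := by ring
      linarith
    constructor
    · calc |x1 t| ≤ b1 * (2 * ((α*lam) * (2*π*((a11+a12)*S)))) := e1
        _ = ((α*lam) * (4*π*(b1*(a11+a12)))) * S := by ring
        _ ≤ (1/2) * S := mul_le_mul_of_nonneg_right hc1 hS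
        _ = S/2 := by ring
    · calc |x2 t| ≤ b2 * (2 * ((α*lam) * (2*π*((a21+a22)*S)))) := e2
        _ = ((α*lam) * (4*π*(b2*(a21+a22)))) * S := by ring
        _ ≤ (1/2) * S := mul_le_mul_of_nonneg_right hc2 hS
        _ = S/2 := by ring
  -- an initial uniform bound
  obtain ⟨M1, hM1⟩ := (isCompact_Icc (a := (0:ℝ)) (b := 2*π)).exists_bound_of_continuousOn
    hx1c.continuousOn
  obtain ⟨M2, hM2⟩ := (isCompact_Icc (a := (0:ℝ)) (b := 2*π)).exists_bound_of_continuousOn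
    hx2c.continuousOn
  have hS0b : ∀ t, |x1 t| ≤ max M1 M2 ∧ |x2 t| ≤ max M1 M2 := by
    intro t
    constructor
    · obtain ⟨s, hsmem, hts⟩ := lv_periodic_reduce h2π hx1p 0 t
      rw [zero_add] at hsmem
      rw [hts]
      exact (hM1 s hsmem).trans (le_max_left _ _)
    · obtain ⟨s, hsmem, hts⟩ := lv_periodic_reduce h2π hx2p 0 t
      rw [zero_add] at hsmem
      rw [hts]
      exact (hM2 s hsmem).trans (le_max_right _ _)
  have hS0 : 0 ≤ max M1 M2 :=
    le_trans (abs_nonneg (x1 0)) (hS0b 0).1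
  -- iterate the contraction
  have iter : ∀ n : ℕ, ∀ t, |x1 t| ≤ (max M1 M2)/2^n ∧ |x2 t| ≤ (max M1 M2)/2^n := by
    intro n
    induction n with
    | zero => simpa using hS0b
    | succ n ih =>
      intro t
      have hdd : (max M1 M2)/2^(n+1) = ((max M1 M2)/2^n)/2 := by
        rw [pow_succ, div_div]
      rw [hdd]
      exact step ((max M1 M2)/2^n) (div_nonneg hS0 (by positivity)) ih t
  -- conclude
  intro t
  have hlim : Filter.Tendsto (fun n : ℕ => (max M1 M2)/2^n) Filter.atTop (nhds 0) := by
    have h := tendsto_pow_atTop_nhds_zero_of_lt_one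
      (by norm_num : (0:ℝ) ≤ 1/2) (by norm_num : (1/2:ℝ) < 1)
    have h2 := h.const_mul (max M1 M2)
    rw [mul_zero] at h2
    refine h2.congr (fun n => ?_)
    rw [div_pow, one_pow, mul_one_div]
  have h1 : |x1 t| ≤ 0 := ge_of_tendsto' hlim (fun n => (iter n t).1)
  have h2 : |x2 t| ≤ 0 := ge_of_tendsto' hlim (fun n => (iter n t).2)
  exact ⟨abs_nonpos_iff.mp h1, abs_nonpos_iff.mp h2⟩
end

section
/- Let c > 0 and τ' > 0. The scalar delay differential equation u'(t) = −c·u(t − τ') has a continuously differentiable 2π-periodic solution u : ℝ → ℝ that is not identically zero if and only if there exist k ∈ ℕ, k ≥ 1, and n ∈ ℕ ∪ {0} such that c = k and kτ' = π/2 + 2nπ. Moreover, in that case every 2π-periodic solution u is of the form u(t) = c₁cos(kt) + c₂sin(kt) for some c₁, c₂ ∈ ℝ with k = c. -/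
open Real Complex intervalIntegral

noncomputable section SDP

/-- integral of a nontrivial character over a period vanishes -/
lemma sdp_int_exp (m : ℤ) :
    ∫ t in (0:ℝ)..(2*π), Complex.exp ((m:ℂ) * t * Complex.I) =
      if m = 0 then ((2*π:ℝ) : ℂ) else 0 := by
  split_ifs with h
  · subst h; simp
  · have hc : (m:ℂ) * Complex.I ≠ 0 := by
      simp [Complex.I_ne_zero, h]
    have hrw : ∀ t : ℝ, (m:ℂ) * t * Complex.I = ((m:ℂ) * Complex.I) * t := by
      intro t; ring
    simp_rw [hrw]
    rw [integral_exp_mul_complex hc]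
    have h1 : (m:ℂ) * Complex.I * ((2*π:ℝ):ℂ) = (m:ℤ) * (2 * (π:ℂ) * Complex.I) := by
      push_cast; ring
    rw [h1, Complex.exp_int_mul_two_pi_mul_I]
    simp

/-- a continuous periodic function with all Fourier coefficients zero vanishes -/
lemma sdp_unique {g : ℝ → ℂ} (hg : Continuous g)
    (hper : Function.Periodic g (2*π))
    (h : ∀ n : ℤ, ∫ t in (0:ℝ)..(2*π), Complex.exp (-(n:ℂ) * t * Complex.I) * g t = 0) :
    ∀ t, g t = 0 := by
  haveI : Fact (0 < 2*π) := ⟨by positivity⟩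
  have hFc : Continuous (hper.lift) := hg.quotient_liftOn' _
  set F : C(AddCircle (2*π), ℂ) := ⟨hper.lift, hFc⟩ with hF
  have hcoeff : ∀ n : ℤ, fourierCoeff (F : AddCircle (2*π) → ℂ) n = 0 := by
    intro n
    rw [fourierCoeff_eq_intervalIntegral _ n 0]
    have : ∀ x : ℝ, x ∈ Set.uIcc (0:ℝ) (0 + 2*π) →
        (fourier (-n) (x : AddCircle (2*π))) • (F (x : AddCircle (2*π)))
          = Complex.exp (-(n:ℂ) * x * Complex.I) * g x := by
      intro x _
      rw [fourier_coe_apply]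
      congr 1
      · congr 1
        have h2 : (π:ℂ) ≠ 0 := by
          simpa using Complex.ofReal_ne_zero.mpr Real.pi_ne_zero
        field_simp
        push_cast; ring
    rw [intervalIntegral.integral_congr this]
    rw [zero_add, h n]
    simp
  intro t
  have hsummable : Summable (fourierCoeff (F : AddCircle (2*π) → ℂ)) := by
    apply summable_of_ne_finset_zero (s := ∅); intro n _; exact hcoeff n
  have := has_pointwise_sum_fourier_series_of_summable hsummable (t : AddCircle (2*π))
  simp only [hcoeff, zero_smul] at this
  have h0 := this.unique hasSum_zero
  have : g t = F (t : AddCircle (2*π)) := (hper.lift_coe t).symm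
  rw [this, ← h0]

lemma sdp_key {c τ' : ℝ} (u : ℝ → ℝ)
    (hu : ContDiff ℝ 1 u) (hper : Function.Periodic u (2*π))
    (hde : ∀ t : ℝ, deriv u t = -c * u (t - τ')) (n : ℤ) :
    ((n:ℂ) * Complex.I + (c:ℂ) * Complex.exp (-(n:ℂ) * (τ':ℂ) * Complex.I)) *
      (∫ t in (0:ℝ)..(2*π), Complex.exp (-(n:ℂ) * (t:ℂ) * Complex.I) * (u t : ℂ)) = 0 := by
  set a : ℂ := -(n:ℂ) * Complex.I with ha
  set g : ℝ → ℂ := fun t => (u t : ℂ) with hg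
  have hgc : Continuous g := Complex.continuous_ofReal.comp hu.continuous
  have hgper : Function.Periodic g (2*π) := fun t => by simp [hg, hper t]
  have hud : Differentiable ℝ u := hu.differentiable one_ne_zero
  have hdc : Continuous (deriv u) := hu.continuous_deriv le_rfl
  set P : ℝ → ℂ := fun t => Complex.exp (a * t) with hP
  have hPc : Continuous P := by fun_prop
  have hPd : ∀ x : ℝ, HasDerivAt P (a * P x) x := by
    intro x
    have hm : HasDerivAt (fun z : ℂ => a * z) a (x:ℂ) := by
      simpa using (hasDerivAt_id (x:ℂ)).const_mul a
    have h1 := (Complex.hasDerivAt_exp (a * (x:ℂ))).comp (x:ℂ) hm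
    have h2 := h1.comp_ofReal
    simpa [hP, Function.comp, mul_comm] using h2
  have hgd : ∀ x : ℝ, HasDerivAt g (Complex.ofReal (deriv u x)) x := fun x =>
    ((hud x).hasDerivAt).ofReal_comp
  set B : ℂ := ∫ t in (0:ℝ)..(2*π), P t * g t with hB
  -- boundary values
  have hPend : P (2*π) = 1 := by
    have : a * ((2*π : ℝ):ℂ) = (-n : ℤ) * (2 * (π:ℂ) * Complex.I) := by
      push_cast [ha]; ring
    rw [hP]; simp only []; rw [this, Complex.exp_int_mul_two_pi_mul_I]
  have hgend : g (2*π) = g 0 := by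
    have := hgper 0; rw [zero_add] at this; exact this
  have hP0 : P 0 = 1 := by simp [hP]
  -- integration by parts
  have hibp : ∫ t in (0:ℝ)..(2*π), P t * Complex.ofReal (deriv u t) =
      P (2*π) * g (2*π) - P 0 * g 0 - ∫ t in (0:ℝ)..(2*π), (a * P t) * g t :=
    integral_mul_deriv_eq_deriv_mul
      (fun x _ => hPd x) (fun x _ => hgd x)
      ((hPc.const_smul a).intervalIntegrable _ _)
      ((Complex.continuous_ofReal.comp hdc).intervalIntegrable _ _)
  have hibp2 : ∫ t in (0:ℝ)..(2*π), P t * Complex.ofReal (deriv u t) = -a * B := by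
    rw [hibp, hPend, hP0, hgend]
    have : ∫ t in (0:ℝ)..(2*π), (a * P t) * g t = a * B := by
      rw [hB, ← intervalIntegral.integral_const_mul]
      congr 1; ext t; ring
    rw [this]; ring
  -- the delay substitution
  have hshift : ∫ t in (0:ℝ)..(2*π), P t * Complex.ofReal (deriv u t) =
      (-c : ℂ) * (Complex.exp (a * τ') * B) := by
    have hfun : ∀ t : ℝ, P t * Complex.ofReal (deriv u t) =
        (-c : ℂ) * ((fun s : ℝ => Complex.exp (a * ((s:ℂ) + (τ':ℂ))) * g s) (t - τ')) := by
      intro t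
      rw [hde t]
      push_cast
      have : ((t:ℂ) - (τ':ℂ) + (τ':ℂ)) = (t:ℂ) := by ring
      simp only [hg, this]
      ring
    rw [intervalIntegral.integral_congr (fun t _ => hfun t)]
    rw [intervalIntegral.integral_const_mul]
    congr 1
    rw [intervalIntegral.integral_comp_sub_right
      (fun s : ℝ => Complex.exp (a * ((s:ℂ) + (τ':ℂ))) * g s) τ']
    have hQ : ∀ s : ℝ, Complex.exp (a * ((s:ℂ) + (τ':ℂ))) * g s
        = Complex.exp (a * τ') * (P s * g s) := by
      intro s; rw [mul_add, Complex.exp_add]; ring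
    simp_rw [hQ]
    rw [intervalIntegral.integral_const_mul]
    congr 1
    have hPper : Function.Periodic (fun s => P s * g s) (2*π) := by
      intro s
      have h3 : P (s + 2*π) = P s * P (2*π) := by
        simp only [hP]; push_cast; rw [mul_add, Complex.exp_add]
      simp only []
      rw [h3, hPend, mul_one, hgper s]
    have h4 := hPper.intervalIntegral_add_eq (0 - τ') 0
    have e1 : (0:ℝ) - τ' + 2*π = 2*π - τ' := by ring
    have e2 : (0:ℝ) + 2*π = 2*π := by ring
    rw [e1, e2] at h4
    exact h4
  -- combine
  have hrw : ∀ t : ℝ, -(n:ℂ) * (t:ℂ) * Complex.I = a * (t:ℂ) := fun t => by rw [ha]; ring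
  simp_rw [hrw]
  have hna : (n:ℂ) * Complex.I = -a := by rw [ha]; ring
  rw [hna]
  have hBe : (∫ t in (0:ℝ)..(2*π), Complex.exp (a * (t:ℂ)) * ((u t : ℝ) : ℂ)) = B := rfl
  rw [hBe]
  have E := hibp2.symm.trans hshift
  linear_combination E

/-- if the symbol vanishes at n then |n| = c -/
lemma sdp_norm {c τ' : ℝ} (hc : 0 < c) {n : ℤ}
    (h : (n:ℂ) * Complex.I + (c:ℂ) * Complex.exp (-(n:ℂ) * (τ':ℂ) * Complex.I) = 0) :
    ((n.natAbs : ℝ)) = c := by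
  have h1 : (n:ℂ) * Complex.I = -((c:ℂ) * Complex.exp (-(n:ℂ) * (τ':ℂ) * Complex.I)) := by
    linear_combination h
  have h2 := congrArg (‖·‖) h1
  have hXre : (-(n:ℂ) * (τ':ℂ) * Complex.I).re = 0 := by simp
  simp only [norm_neg] at h2
  rw [norm_mul, norm_mul, Complex.norm_I, Complex.norm_exp, hXre, Real.exp_zero] at h2
  simp only [mul_one, Complex.norm_intCast, Complex.norm_real, Real.norm_eq_abs] at h2
  rw [abs_of_pos hc] at h2
  rw [Nat.cast_natAbs]
  push_cast
  exact h2

/-- phase condition -/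
lemma sdp_phase {x : ℝ} (hx : 0 < x)
    (h : Complex.exp ((x:ℂ) * Complex.I) = Complex.I) :
    ∃ N : ℕ, x = π / 2 + 2 * (N:ℝ) * π := by
  have hI : Complex.exp (((π/2 : ℝ):ℂ) * Complex.I) = Complex.I := by
    rw [Complex.exp_mul_I]
    push_cast
    rw [Complex.cos_pi_div_two, Complex.sin_pi_div_two]
    ring
  have h1 : Complex.exp (((x - π/2 : ℝ):ℂ) * Complex.I) = 1 := by
    have : ((x - π/2 : ℝ):ℂ) * Complex.I
        = (x:ℂ) * Complex.I - ((π/2 : ℝ):ℂ) * Complex.I := by push_cast; ring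
    rw [this, Complex.exp_sub, h, hI, div_self Complex.I_ne_zero]
  rw [Complex.exp_eq_one_iff] at h1
  obtain ⟨m, hm⟩ := h1
  have h2 : (x - π/2 : ℝ) = (m:ℝ) * (2 * π) := by
    have := congrArg Complex.im hm
    simpa using this
  have hm0 : 0 ≤ m := by
    by_contra hneg
    push_neg at hneg
    have hm1 : (m:ℝ) ≤ -1 := by
      have : m ≤ -1 := by omega
      exact_mod_cast this
    nlinarith [Real.pi_gt_three]
  refine ⟨m.toNat, ?_⟩
  have : ((m.toNat : ℤ) : ℝ) = (m : ℝ) := by rw [Int.toNat_of_nonneg hm0]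
  push_cast at this ⊢
  rw [this]
  linarith [h2]

/-- Characterization of nontrivial 2π-periodic solutions of the scalar delay
equation u'(t) = −c·u(t−τ'), together with the form of all solutions in the
resonant case. -/
theorem scalar_delay_periodic_characterization
    (c τ' : ℝ) (hc : 0 < c) (hτ : 0 < τ') :
    ((∃ u : ℝ → ℝ, ContDiff ℝ 1 u ∧ Function.Periodic u (2 * π) ∧
        (¬ ∀ t : ℝ, u t = 0) ∧
        (∀ t : ℝ, deriv u t = -c * u (t - τ'))) ↔
      (∃ (k : ℕ) (n : ℕ), 1 ≤ k ∧ c = (k : ℝ) ∧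
        (k : ℝ) * τ' = π / 2 + 2 * (n : ℝ) * π)) ∧
    (∀ (k n : ℕ), 1 ≤ k → c = (k : ℝ) →
      (k : ℝ) * τ' = π / 2 + 2 * (n : ℝ) * π →
      ∀ u : ℝ → ℝ, ContDiff ℝ 1 u → Function.Periodic u (2 * π) →
        (∀ t : ℝ, deriv u t = -c * u (t - τ')) →
        ∃ c1 c2 : ℝ, ∀ t : ℝ,
          u t = c1 * Real.cos ((k : ℝ) * t) + c2 * Real.sin ((k : ℝ) * t)) := by
  have hπ : (0:ℝ) < 2*π := by positivity
  constructor
  · constructor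
    · -- forward direction
      rintro ⟨u, hu, hper, hnz, hde⟩
      by_cases H : ∃ m : ℤ, (m:ℂ) * Complex.I
          + (c:ℂ) * Complex.exp (-(m:ℂ) * (τ':ℂ) * Complex.I) = 0
      · obtain ⟨m, hm⟩ := H
        have hnorm := sdp_norm hc hm
        set k : ℕ := m.natAbs with hkdef
        have hk : 1 ≤ k := by
          rcases Nat.eq_zero_or_pos k with h0 | h1
          · exfalso; rw [h0] at hnorm; simp at hnorm; linarith
          · exact h1
        have hck : c = (k:ℝ) := hnorm.symm
        have hKne : ((k:ℕ):ℂ) ≠ 0 := by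
          simp only [ne_eq, Nat.cast_eq_zero]; omega
        -- derive exp((k:ℂ)*τ'*I) = I
        have h6 : Complex.exp (((k:ℕ):ℂ) * (τ':ℂ) * Complex.I) = Complex.I := by
          rcases Int.natAbs_eq m with he | he
          · -- m = k
            rw [he, hck] at hm
            simp only [Int.cast_natCast, Complex.ofReal_natCast] at hm
            have h5 : Complex.exp (-((k:ℕ):ℂ) * (τ':ℂ) * Complex.I) = -Complex.I := by
              apply mul_left_cancel₀ hKne
              linear_combination hm
            have hx : ((k:ℕ):ℂ) * (τ':ℂ) * Complex.I
                = -(-((k:ℕ):ℂ) * (τ':ℂ) * Complex.I) := by ring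
            rw [hx, Complex.exp_neg, h5, inv_neg, Complex.inv_I, neg_neg]
          · -- m = -k
            rw [he, hck] at hm
            simp only [Int.cast_neg, Int.cast_natCast, Complex.ofReal_natCast] at hm
            rw [show -(-((k:ℕ):ℂ)) * (τ':ℂ) * Complex.I
                = ((k:ℕ):ℂ) * (τ':ℂ) * Complex.I by ring] at hm
            apply mul_left_cancel₀ hKne
            linear_combination hm
        have hx2 : (0:ℝ) < (k:ℝ) * τ' := by
          apply mul_pos _ hτ
          exact_mod_cast hk
        have h7 : Complex.exp ((((k:ℝ) * τ' : ℝ):ℂ) * Complex.I) = Complex.I := by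
          rw [show (((k:ℝ) * τ' : ℝ):ℂ) * Complex.I
              = ((k:ℕ):ℂ) * (τ':ℂ) * Complex.I by push_cast; ring]
          exact h6
        obtain ⟨N, hN⟩ := sdp_phase hx2 h7
        exact ⟨k, N, hk, hck, hN⟩
      · push_neg at H
        exfalso
        apply hnz
        intro t
        have hz := sdp_unique (g := fun t => ((u t : ℝ) : ℂ))
          (Complex.continuous_ofReal.comp hu.continuous)
          (fun s => by simp [hper s])
          (fun m => by
            have := sdp_key u hu hper hde m
            exact (mul_eq_zero.mp this).resolve_left (H m))
        have h9 : ((u t : ℝ) : ℂ) = 0 := hz t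
        exact_mod_cast h9
    · -- backward: existence
      rintro ⟨k, n, hk, hck, hres⟩
      refine ⟨fun t => Real.cos ((k:ℝ) * t), ?_, ?_, ?_, ?_⟩
      · exact Real.contDiff_cos.comp (contDiff_const.mul contDiff_id)
      · intro t
        simp only []
        rw [show (k:ℝ) * (t + 2*π) = (k:ℝ)*t + (k:ℤ) * (2*π) by push_cast; ring,
          Real.cos_add_int_mul_two_pi]
      · intro hall
        have := hall 0
        simp at this
      · intro t
        have hD : HasDerivAt (fun t => Real.cos ((k:ℝ) * t))
            (-Real.sin ((k:ℝ)*t) * ((k:ℝ)*1)) t :=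
          (Real.hasDerivAt_cos ((k:ℝ)*t)).comp t ((hasDerivAt_id t).const_mul (k:ℝ))
        rw [hD.deriv, hck]
        show -Real.sin ((k:ℝ)*t) * ((k:ℝ)*1) = -(k:ℝ) * Real.cos ((k:ℝ) * (t - τ'))
        have e3 : (k:ℝ) * (t - τ') = ((k:ℝ)*t - π/2) - (n:ℤ) * (2*π) := by
          push_cast
          rw [mul_sub, hres]
          ring
        rw [e3, Real.cos_sub_int_mul_two_pi, Real.cos_sub_pi_div_two]
        ring
  · -- classification
    intro k n hk hck hres u hu hper hde
    have hπne : (((2*π:ℝ)):ℂ) ≠ 0 := by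
      simp only [ne_eq, Complex.ofReal_eq_zero]
      positivity
    set K : ℂ := ((k:ℕ):ℂ) with hKdef
    set B : ℤ → ℂ := fun m =>
      ∫ t in (0:ℝ)..(2*π), Complex.exp (-(m:ℂ) * (t:ℂ) * Complex.I) * ((u t : ℝ) : ℂ)
      with hBdef
    have hBvanish : ∀ m : ℤ, m ≠ (k:ℤ) → m ≠ -(k:ℤ) → B m = 0 := by
      intro m h1 h2
      have hkey := sdp_key u hu hper hde m
      refine (mul_eq_zero.mp hkey).resolve_left ?_
      intro hΦ
      have := sdp_norm hc hΦ
      rw [hck] at this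
      have : m.natAbs = k := Nat.cast_injective this
      omega
    set a : ℂ := B (k:ℤ) / ((2*π:ℝ):ℂ) with hadef
    set b : ℂ := B (-(k:ℤ)) / ((2*π:ℝ):ℂ) with hbdef
    set φ : ℝ → ℂ := fun t =>
      a * Complex.exp (K * (t:ℂ) * Complex.I) + b * Complex.exp (-K * (t:ℂ) * Complex.I)
      with hφdef
    have hexpcont : ∀ w : ℂ, Continuous fun t : ℝ => Complex.exp (w * (t:ℂ) * Complex.I) := by
      intro w; fun_prop
    have hφcont : Continuous φ := by
      apply Continuous.add
      · exact continuous_const.mul (hexpcont K)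
      · exact continuous_const.mul (hexpcont (-K))
    have hEper : ∀ w : ℂ, (∃ m : ℤ, w = (m:ℂ)) →
        Function.Periodic (fun t : ℝ => Complex.exp (w * (t:ℂ) * Complex.I)) (2*π) := by
      rintro w ⟨m, rfl⟩ t
      simp only []
      rw [show (m:ℂ) * ((t + 2*π : ℝ):ℂ) * Complex.I
          = (m:ℂ) * (t:ℂ) * Complex.I + (m:ℤ) * (2 * (π:ℂ) * Complex.I) by push_cast; ring,
        Complex.exp_add, Complex.exp_int_mul_two_pi_mul_I, mul_one]
    have hφper : Function.Periodic φ (2*π) := by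
      intro t
      have h1 := hEper K ⟨(k:ℤ), by push_cast [hKdef]; ring⟩ t
      have h2 := hEper (-K) ⟨-(k:ℤ), by push_cast [hKdef]; ring⟩ t
      simp only [] at h1 h2
      simp only [hφdef]
      rw [h1, h2]
    set h : ℝ → ℂ := fun t => ((u t : ℝ) : ℂ) - φ t with hhdef
    have hcoeffh : ∀ m : ℤ,
        ∫ t in (0:ℝ)..(2*π), Complex.exp (-(m:ℂ) * (t:ℂ) * Complex.I) * h t
          = B m - (a * (if (k:ℤ) - m = 0 then ((2*π:ℝ):ℂ) else 0)
              + b * (if -(k:ℤ) - m = 0 then ((2*π:ℝ):ℂ) else 0)) := by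
      intro m
      have e1 : ∀ t : ℝ, Complex.exp (-(m:ℂ) * (t:ℂ) * Complex.I) * h t
          = Complex.exp (-(m:ℂ) * (t:ℂ) * Complex.I) * ((u t : ℝ) : ℂ)
            - (a * Complex.exp (((((k:ℤ) - m : ℤ)):ℂ) * (t:ℂ) * Complex.I)
              + b * Complex.exp ((((-(k:ℤ) - m : ℤ)):ℂ) * (t:ℂ) * Complex.I)) := by
        intro t
        simp only [hhdef, hφdef]
        rw [show ((((k:ℤ) - m : ℤ)):ℂ) * (t:ℂ) * Complex.I
            = K * (t:ℂ) * Complex.I + (-(m:ℂ) * (t:ℂ) * Complex.I) by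
          push_cast [hKdef]; ring]
        rw [show (((-(k:ℤ) - m : ℤ)):ℂ) * (t:ℂ) * Complex.I
            = -K * (t:ℂ) * Complex.I + (-(m:ℂ) * (t:ℂ) * Complex.I) by
          push_cast [hKdef]; ring]
        rw [Complex.exp_add, Complex.exp_add]
        ring
      rw [intervalIntegral.integral_congr (fun t _ => e1 t)]
      rw [intervalIntegral.integral_sub]
      · congr 1
        rw [intervalIntegral.integral_add]
        · congr 1
          · rw [intervalIntegral.integral_const_mul, sdp_int_exp]
          · rw [intervalIntegral.integral_const_mul, sdp_int_exp]
        · exact (continuous_const.mul (hexpcont _)).intervalIntegrable _ _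
        · exact (continuous_const.mul (hexpcont _)).intervalIntegrable _ _
      · exact ((hexpcont _).mul
          (Complex.continuous_ofReal.comp hu.continuous)).intervalIntegrable _ _
      · exact ((continuous_const.mul (hexpcont _)).add
          (continuous_const.mul (hexpcont _))).intervalIntegrable _ _
    have hhzero : ∀ t, h t = 0 := by
      apply sdp_unique
      · exact (Complex.continuous_ofReal.comp hu.continuous).sub hφcont
      · intro t
        simp only [hhdef]
        rw [hper t, hφper t]
      · intro m
        rw [hcoeffh m]
        by_cases h1 : m = (k:ℤ)
        · subst h1
          rw [if_pos (by omega), if_neg (by omega)]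
          simp only [hadef, mul_zero, add_zero]
          rw [div_mul_cancel₀ _ hπne, sub_self]
        · by_cases h2 : m = -(k:ℤ)
          · subst h2
            rw [if_neg (by omega), if_pos (by omega)]
            simp only [hbdef, mul_zero, zero_add]
            rw [div_mul_cancel₀ _ hπne, sub_self]
          · rw [if_neg (by omega), if_neg (by omega), hBvanish m h1 h2]
            simp
    refine ⟨a.re + b.re, b.im - a.im, ?_⟩
    intro t
    have hu_eq : ((u t : ℝ) : ℂ) = φ t := by
      have := hhzero t
      simp only [hhdef, sub_eq_zero] at this
      exact this
    have hre : (φ t).re = (a.re + b.re) * Real.cos ((k:ℝ)*t)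
        + (b.im - a.im) * Real.sin ((k:ℝ)*t) := by
      simp only [hφdef, Complex.add_re, Complex.mul_re]
      rw [show K * (t:ℂ) * Complex.I = ((((k:ℝ)*t : ℝ)):ℂ) * Complex.I by
          push_cast [hKdef]; ring,
        show -K * (t:ℂ) * Complex.I = (((-((k:ℝ)*t) : ℝ)):ℂ) * Complex.I by
          push_cast [hKdef]; ring]
      rw [Complex.exp_ofReal_mul_I_re, Complex.exp_ofReal_mul_I_im,
        Complex.exp_ofReal_mul_I_re, Complex.exp_ofReal_mul_I_im]
      rw [Real.cos_neg, Real.sin_neg]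
      ring
    have : u t = (φ t).re := by
      rw [← hu_eq, Complex.ofReal_re]
    rw [this, hre]
end SDP
end

section
/- Let A = (aᵢⱼ) be a real 2×2 matrix with all aᵢⱼ > 0, let b₁, b₂ > 0, and assume the matrix B = [[b₁a₁₁, b₁a₁₂],[b₂a₂₁, b₂a₂₂]] has two distinct real positive eigenvalues μ₁ ≠ μ₂. Suppose τ > 0 satisfies τμᵢ ≠ π/2 + 2nπ for every n ∈ ℕ ∪ {0} and i = 1,2. Then for every λ > 0, the only continuously differentiable 2π-periodic solution (u,v) of the system u'(t) = −λb₁(a₁₁u(t−τ/λ) + a₁₂v(t−τ/λ)), v'(t) = −λb₂(a₂₁u(t−τ/λ) + a₂₂v(t−τ/λ)) is u ≡ v ≡ 0. -/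
open Real

section auxScalar
open Complex MeasureTheory intervalIntegral


noncomputable section

private lemma my_shift (f : ℝ → ℂ) (hfper : Function.Periodic f (2*π))
    (n : ℤ) (d : ℝ) :
    ∫ x in (0:ℝ)..(2*π), Complex.exp (-(Complex.I*n*x)) * f (x - d)
      = Complex.exp (-(Complex.I*n*d)) * ∫ x in (0:ℝ)..(2*π), Complex.exp (-(Complex.I*n*x)) * f x := by
  set K : ℝ → ℂ := fun x => Complex.exp (-(Complex.I*n*x)) * f x with hK
  have hKper : Function.Periodic K (2*π) := by
    intro x
    simp only [hK]
    rw [hfper x]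
    congr 1
    push_cast
    rw [show -(Complex.I*n*(x + 2*π)) = -(Complex.I*n*x) + (-n : ℤ) * (2*π*Complex.I) by push_cast; ring,
      Complex.exp_add, Complex.exp_int_mul_two_pi_mul_I, mul_one]
  have step1 : ∀ x : ℝ, Complex.exp (-(Complex.I*n*x)) * f (x - d)
      = Complex.exp (-(Complex.I*n*d)) * K (x - d) := by
    intro x
    simp only [hK]
    rw [← mul_assoc, ← Complex.exp_add]
    congr 2
    push_cast
    ring
  rw [intervalIntegral.integral_congr (fun x _ => step1 x), intervalIntegral.integral_const_mul]
  congr 1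
  rw [intervalIntegral.integral_comp_sub_right K d]
  rw [show (0:ℝ) - d = -d by ring, show 2*π - d = -d + 2*π by ring]
  have := hKper.intervalIntegral_add_eq (-d) 0
  rwa [zero_add] at this

private lemma my_form (W : ℝ → ℂ) (n : ℤ) (hab : (0:ℝ) < 0 + 2*π) :
    fourierCoeffOn hab W n = (1/(2*π) : ℂ) *
      ∫ x in (0:ℝ)..(2*π), Complex.exp (-(Complex.I*n*x)) * W x := by
  haveI : Fact ((0:ℝ) < 2*π) := ⟨by positivity⟩
  rw [fourierCoeffOn_eq_integral]
  simp only [zero_add, sub_zero, fourier_coe_apply, smul_eq_mul, real_smul]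
  have hexp : ∀ x : ℝ, (2*(π:ℂ)*Complex.I*((-n : ℤ):ℂ)*(x:ℂ)/((2*π : ℝ):ℂ)) = -(Complex.I*n*x) := by
    intro x
    have hπ : (π:ℂ) ≠ 0 := Complex.ofReal_ne_zero.mpr Real.pi_ne_zero
    push_cast; field_simp
  rw [intervalIntegral.integral_congr (g := fun x => Complex.exp (-(Complex.I*n*x)) * W x)
    (fun x _ => by rw [hexp x])]
  push_cast
  ring

private lemma my_nonvan (c d : ℝ) (hc : 0 < c) (hd : 0 < d)
    (hres : ∀ n : ℕ, c * d ≠ π/2 + 2*(n:ℝ)*π) (n : ℤ) :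
    Complex.I * n + (c:ℂ) * Complex.exp (-(Complex.I*n*d)) ≠ 0 := by
  intro h
  have h2 : (Complex.I * n : ℂ) = -((c:ℂ) * Complex.exp (-(Complex.I*n*d))) := by
    linear_combination h
  have habs := congrArg (‖·‖) h2
  have hexpabs : ‖(Complex.exp (-(Complex.I*n*d)))‖ = 1 := by
    rw [show (-(Complex.I*(n:ℂ)*(d:ℝ))) = ((-(n*d) : ℝ) : ℂ) * Complex.I by push_cast; ring]
    exact Complex.norm_exp_ofReal_mul_I _
  rw [norm_neg, norm_mul, norm_mul, hexpabs, mul_one, Complex.norm_I, Complex.norm_intCast,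
    Complex.norm_real, Real.norm_eq_abs, one_mul, abs_of_pos hc] at habs
  have hn0 : n ≠ 0 := by
    intro hn; rw [hn] at habs; simp at habs; linarith
  have hcne : (c:ℂ) ≠ 0 := Complex.ofReal_ne_zero.mpr hc.ne'
  rcases lt_or_gt_of_ne hn0 with hneg | hpos
  · have hnc : (n:ℝ) = -c := by
      have h3 : |(n:ℝ)| = c := by exact_mod_cast habs
      rw [abs_of_neg (by exact_mod_cast hneg)] at h3
      linarith
    have hnC : (n:ℂ) = -(c:ℂ) := by
      rw [show ((n:ℤ):ℂ) = ((n:ℝ):ℂ) by push_cast; ring, hnc]; push_cast; ring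
    have harg : (-(Complex.I*(n:ℂ)*(d:ℝ))) = ((c*d : ℝ):ℂ) * Complex.I := by
      rw [hnC]; push_cast; ring
    rw [harg, hnC] at h2
    have e1 : Complex.exp (((c*d : ℝ):ℂ) * Complex.I) = Complex.I :=
      mul_left_cancel₀ hcne (by linear_combination h2)
    have hexp : Complex.exp (((c*d : ℝ):ℂ) * Complex.I) = Complex.exp (((π/2 : ℝ):ℂ) * Complex.I) := by
      rw [e1, Complex.exp_mul_I, ← Complex.ofReal_cos, ← Complex.ofReal_sin]
      norm_num
    rw [Complex.exp_eq_exp_iff_exists_int] at hexp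
    obtain ⟨k, hk⟩ := hexp
    have hkim : c * d = π/2 + k * (2*π) := by
      have := congrArg Complex.im hk
      simpa using this
    have hk0 : 0 ≤ k := by
      by_contra hk0
      push_neg at hk0
      have hk1 : k ≤ -1 := by omega
      have : (k:ℝ) ≤ -1 := by exact_mod_cast hk1
      nlinarith [Real.pi_pos, mul_pos hc hd]
    refine hres k.toNat ?_
    have hcast : ((k.toNat : ℕ) : ℝ) = (k : ℝ) := by exact_mod_cast Int.toNat_of_nonneg hk0
    rw [hkim, hcast]
    ring
  · have hnc : (n:ℝ) = c := by
      have h3 : |(n:ℝ)| = c := by exact_mod_cast habs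
      rw [abs_of_pos (by exact_mod_cast hpos)] at h3
      linarith
    have hnC : (n:ℂ) = (c:ℂ) := by
      rw [show ((n:ℤ):ℂ) = ((n:ℝ):ℂ) by push_cast; ring, hnc]
    have harg : (-(Complex.I*(n:ℂ)*(d:ℝ))) = ((-(c*d) : ℝ):ℂ) * Complex.I := by
      rw [hnC]; push_cast; ring
    rw [harg, hnC] at h2
    have e1 : Complex.exp (((-(c*d) : ℝ):ℂ) * Complex.I) = -Complex.I :=
      mul_left_cancel₀ hcne (by linear_combination h2)
    have hexp : Complex.exp (((-(c*d) : ℝ):ℂ) * Complex.I)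
        = Complex.exp (((-(π/2) : ℝ):ℂ) * Complex.I) := by
      rw [e1, Complex.exp_mul_I, ← Complex.ofReal_cos, ← Complex.ofReal_sin]
      norm_num
    rw [Complex.exp_eq_exp_iff_exists_int] at hexp
    obtain ⟨k, hk⟩ := hexp
    have hkim : -(c * d) = -(π/2) + k * (2*π) := by
      have := congrArg Complex.im hk
      simpa using this
    have hk0 : 0 ≤ -k := by
      by_contra hk0
      push_neg at hk0
      have hk1 : 1 ≤ k := by omega
      have : (1:ℝ) ≤ (k:ℝ) := by exact_mod_cast hk1
      nlinarith [Real.pi_pos, mul_pos hc hd]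
    refine hres (-k).toNat ?_
    have hcast : (((-k).toNat : ℕ) : ℝ) = -(k : ℝ) := by
      have := Int.toNat_of_nonneg hk0
      exact_mod_cast congrArg (Int.cast : ℤ → ℝ) this
    rw [hcast]
    linarith [hkim]

private lemma my_scalar (c d : ℝ) (hc : 0 < c) (hd : 0 < d)
    (hres : ∀ n : ℕ, c * d ≠ π/2 + 2*(n:ℝ)*π)
    (w : ℝ → ℝ) (hw : ContDiff ℝ 1 w) (hper : Function.Periodic w (2*π))
    (heq : ∀ t, deriv w t = -c * w (t - d)) : ∀ t, w t = 0 := by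
  have hπ : (0:ℝ) < 2*π := by positivity
  haveI : Fact ((0:ℝ) < 2*π) := ⟨hπ⟩
  set W : ℝ → ℂ := fun t => (w t : ℂ) with hW
  have hwc : Continuous w := hw.continuous
  have hWc : Continuous W := Complex.continuous_ofReal.comp hwc
  have hWper : Function.Periodic W (2*π) := fun x => by simp only [hW, hper x]
  set G : ℝ → ℂ := fun t => (-c : ℂ) * W (t - d) with hG
  have hGc : Continuous G := by
    apply Continuous.mul continuous_const
    exact hWc.comp (by continuity)
  have hWderiv : ∀ t, HasDerivAt W (G t) t := by
    intro t
    have h1 : HasDerivAt w (deriv w t) t :=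
      ((hw.differentiable one_ne_zero) t).hasDerivAt
    have h2 := h1.ofReal_comp
    rw [heq t] at h2
    convert h2 using 1
    simp only [hG, hW]
    push_cast
    ring
  have hab : (0:ℝ) < 0 + 2*π := by linarith
  set F : ℤ → ℂ := fun n => fourierCoeffOn hab W n with hF
  set Fd : ℤ → ℂ := fun n => fourierCoeffOn hab G n with hFd
  have hW2π : W (0 + 2*π) - W 0 = 0 := by rw [hWper 0, sub_self]
  -- derivative relation
  have hderivrel : ∀ n : ℤ, Fd n = Complex.I * n * F n := by
    intro n
    rcases eq_or_ne n 0 with rfl | hn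
    · simp only [hFd, Int.cast_zero, mul_zero, zero_mul]
      rw [my_form]
      simp only [Int.cast_zero, mul_zero, zero_mul, neg_zero, Complex.exp_zero, one_mul]
      have hFTC : ∫ x in (0:ℝ)..(2*π), G x = W (2*π) - W 0 :=
        intervalIntegral.integral_eq_sub_of_hasDerivAt (fun x _ => hWderiv x)
          (hGc.intervalIntegrable 0 (2*π))
      rw [hFTC]
      rw [show W (2*π) - W 0 = 0 by rw [← hW2π, zero_add]]
      ring
    · have key := fourierCoeffOn_of_hasDerivAt hab hn
        (f := W) (f' := G) (fun x _ => hWderiv x)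
        (hGc.intervalIntegrable 0 (0+2*π))
      rw [hW2π, mul_zero] at key
      have hπc : (π:ℂ) ≠ 0 := Complex.ofReal_ne_zero.mpr Real.pi_ne_zero
      have hn' : (n:ℂ) ≠ 0 := Int.cast_ne_zero.mpr hn
      simp only [hF, hFd]
      rw [key]
      push_cast
      field_simp
      ring
  -- shift relation
  have hshift : ∀ n : ℤ, Fd n = (-c : ℂ) * Complex.exp (-(Complex.I*n*d)) * F n := by
    intro n
    simp only [hFd, hF]
    rw [my_form, my_form]
    have : ∀ x : ℝ, x ∈ Set.uIcc (0:ℝ) (2*π) →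
        Complex.exp (-(Complex.I*n*x)) * G x
          = (-c : ℂ) * (Complex.exp (-(Complex.I*n*x)) * W (x - d)) := by
      intro x _
      simp only [hG]
      ring
    rw [intervalIntegral.integral_congr this, intervalIntegral.integral_const_mul,
      my_shift W hWper n d]
    ring
  -- all coefficients vanish
  have hFzero : ∀ n : ℤ, F n = 0 := by
    intro n
    have h1 := hderivrel n
    have h2 := hshift n
    have h3 : (Complex.I * n + (c:ℂ) * Complex.exp (-(Complex.I*n*d))) * F n = 0 := by
      rw [h2] at h1
      linear_combination -h1
    rcases mul_eq_zero.mp h3 with h | h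
    · exact absurd h (my_nonvan c d hc hd hres n)
    · exact h
  -- conclude
  have hWzero : ∀ t : ℝ, W t = 0 := by
    set g : AddCircle (2*π) → ℂ := AddCircle.liftIco (2*π) 0 W with hg
    have hgc : Continuous g := AddCircle.liftIco_zero_continuous
      (by have := hWper 0; rw [zero_add] at this; exact this.symm) hWc.continuousOn
    set f : C(AddCircle (2*π), ℂ) := ⟨g, hgc⟩ with hf
    have hfc : ∀ n : ℤ, fourierCoeff (⇑f) n = 0 := by
      intro n
      have h0 := fourierCoeff_liftIco_eq (T := 2*π) (a := 0) W n
      rw [hf]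
      simp only [ContinuousMap.coe_mk]
      rw [hg, h0]
      exact hFzero n
    have hsummable : Summable (fourierCoeff (⇑f)) := by
      rw [show fourierCoeff (⇑f) = fun _ => (0:ℂ) from funext hfc]
      exact summable_zero
    have hsum := hasSum_fourier_series_of_summable hsummable
    have hzero : HasSum (fun _ : ℤ => (0 : C(AddCircle (2*π), ℂ))) f := by
      convert hsum using 2 with i
      rw [hfc i, zero_smul]
    have hf0 : f = 0 := hzero.unique hasSum_zero
    have hIco : ∀ x : ℝ, x ∈ Set.Ico (0:ℝ) (2*π) → W x = 0 := by
      intro x hx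
      have h1 : g (x : AddCircle (2*π)) = W x :=
        AddCircle.liftIco_coe_apply (by rwa [zero_add])
      rw [← h1]
      show f (x : AddCircle (2*π)) = 0
      rw [hf0]
      rfl
    intro t
    have hmem := toIcoMod_mem_Ico hπ 0 t
    rw [zero_add] at hmem
    have heq2 : W (toIcoMod hπ 0 t) = W t := by
      rw [toIcoMod]
      exact hWper.sub_zsmul_eq _
    rw [← heq2]
    exact hIco _ hmem
  intro t
  have := hWzero t
  simpa [hW] using this

end
end auxScalar

/-- Under the non-resonance condition on τ, the linear delay system (with
γ = 1) has only the trivial 2π-periodic solution, for every λ > 0. -/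
theorem linear_delay_system_only_trivial
    (a11 a12 a21 a22 b1 b2 μ1 μ2 τ : ℝ)
    (hA0 : 0 < a11 ∧ 0 < a12 ∧ 0 < a21 ∧ 0 < a22)
    (hb1 : 0 < b1) (hb2 : 0 < b2)
    (hA2 : 0 < μ1 ∧ 0 < μ2 ∧ b1 * a11 + b2 * a22 = μ1 + μ2 ∧
      (b1 * a11) * (b2 * a22) - (b1 * a12) * (b2 * a21) = μ1 * μ2)
    (hμ : μ1 ≠ μ2)
    (hτ : 0 < τ)
    (hres1 : ∀ n : ℕ, τ * μ1 ≠ π / 2 + 2 * (n : ℝ) * π)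
    (hres2 : ∀ n : ℕ, τ * μ2 ≠ π / 2 + 2 * (n : ℝ) * π) :
    ∀ lam : ℝ, 0 < lam →
    ∀ u v : ℝ → ℝ, ContDiff ℝ 1 u → ContDiff ℝ 1 v →
      Function.Periodic u (2 * π) → Function.Periodic v (2 * π) →
      (∀ t : ℝ, deriv u t =
        -(lam * b1) * (a11 * u (t - τ / lam) + a12 * v (t - τ / lam))) →
      (∀ t : ℝ, deriv v t =
        -(lam * b2) * (a21 * u (t - τ / lam) + a22 * v (t - τ / lam))) →
      ∀ t : ℝ, u t = 0 ∧ v t = 0 := by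
  obtain ⟨ha11, ha12, ha21, ha22⟩ := hA0
  obtain ⟨hμ1, hμ2, htr, hdet⟩ := hA2
  intro lam hlam u v hu hv huper hvper hequ heqv
  set d : ℝ := τ / lam with hd
  have hd0 : 0 < d := div_pos hτ hlam
  have hdu : ∀ t, DifferentiableAt ℝ u t := fun t => (hu.differentiable one_ne_zero) t
  have hdv : ∀ t, DifferentiableAt ℝ v t := fun t => (hv.differentiable one_ne_zero) t
  -- key: for each eigenvalue μ, the combination b2*a21*u + (μ - b1*a11)*v is zero
  have key : ∀ μ : ℝ, 0 < μ →
      (μ*μ - (b1*a11 + b2*a22)*μ + ((b1*a11)*(b2*a22) - (b1*a12)*(b2*a21)) = 0) →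
      (∀ n : ℕ, τ * μ ≠ π / 2 + 2 * (n : ℝ) * π) →
      ∀ t, b2*a21 * u t + (μ - b1*a11) * v t = 0 := by
    intro μ hμ0 hchar hres
    set w : ℝ → ℝ := fun t => b2*a21 * u t + (μ - b1*a11) * v t with hw
    have hwc : ContDiff ℝ 1 w :=
      (contDiff_const.mul hu).add (contDiff_const.mul hv)
    have hwper : Function.Periodic w (2*π) := by
      intro x
      simp only [hw, huper x, hvper x]
    have hc0 : 0 < lam * μ := mul_pos hlam hμ0
    have hcd : lam * μ * d = τ * μ := by
      rw [hd]
      field_simp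
    have hres' : ∀ n : ℕ, lam * μ * d ≠ π/2 + 2*(n:ℝ)*π := by
      intro n
      rw [hcd]
      exact hres n
    have hweq : ∀ t, deriv w t = -(lam * μ) * w (t - d) := by
      intro t
      have h1 : HasDerivAt w (b2*a21 * deriv u t + (μ - b1*a11) * deriv v t) t :=
        (((hdu t).hasDerivAt).const_mul (b2*a21)).add
          (((hdv t).hasDerivAt).const_mul (μ - b1*a11))
      rw [h1.deriv, hequ t, heqv t]
      simp only [hw]
      have hUV : True := trivial
      linear_combination (lam * v (t - d)) * hchar
    exact my_scalar (lam*μ) d hc0 hd0 hres' w hwc hwper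
      (by intro t; rw [hweq t])
  have hchar1 : μ1*μ1 - (b1*a11 + b2*a22)*μ1 + ((b1*a11)*(b2*a22) - (b1*a12)*(b2*a21)) = 0 := by
    linear_combination (-μ1) * htr + hdet
  have hchar2 : μ2*μ2 - (b1*a11 + b2*a22)*μ2 + ((b1*a11)*(b2*a22) - (b1*a12)*(b2*a21)) = 0 := by
    linear_combination (-μ2) * htr + hdet
  have h1 := key μ1 hμ1 hchar1 hres1
  have h2 := key μ2 hμ2 hchar2 hres2
  intro t
  have hv0 : v t = 0 := by
    have := sub_eq_zero.mpr (Eq.trans (h1 t) (h2 t).symm)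
    have h3 : (μ1 - μ2) * v t = 0 := by linarith [this]
    rcases mul_eq_zero.mp h3 with h | h
    · exact absurd (by linarith : μ1 = μ2) hμ
    · exact h
  have hu0 : u t = 0 := by
    have h4 := h1 t
    rw [hv0, mul_zero, add_zero] at h4
    have hb2a21 : b2*a21 ≠ 0 := (mul_pos hb2 ha21).ne'
    exact (mul_eq_zero.mp h4).resolve_left hb2a21 
  exact ⟨hu0, hv0⟩
end

section
/- Let A = (aᵢⱼ) be a real 2×2 matrix satisfying (A1): ⟨Ax, x⟩ > 0 for all x ∈ ℝ² ∖ {0}. Let b₁, b₂ > 0, λ > 0 and θ ∈ [0,1]. Suppose x₁, x₂ : ℝ → ℝ are continuously differentiable 2π-periodic functions with ∫₀^{2π} x₁(t) dt = ∫₀^{2π} x₂(t) dt = 0, satisfying the undelayed system x₁'(t) = −λ(a₁₁x₁(t) + a₁₂x₂(t))(b₁ + θx₁(t)) and x₂'(t) = −λ(a₂₁x₁(t) + a₂₂x₂(t))(b₂ + θx₂(t)) for all t ∈ ℝ. Then x₁ ≡ x₂ ≡ 0. In particular, for zero delay the system has no non-stationary periodic solutions. -/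
open Real MeasureTheory intervalIntegral

/-- Key integral identity for one component of the system: the integral of
`u * (a*u + c*v)` over a period vanishes. -/
lemma lv_key_int_zero (a c b' lam θ : ℝ) (u v : ℝ → ℝ)
    (hu : ContDiff ℝ 1 u) (hv : Continuous v)
    (hp : Function.Periodic u (2 * π))
    (hm : (∫ t in (0:ℝ)..(2 * π), u t) = 0)
    (hb : 0 < b') (hlam : 0 < lam) (hθ : 0 ≤ θ)
    (heq : ∀ t, deriv u t = -lam * (a * u t + c * v t) * (b' + θ * u t)) :
    (∫ t in (0:ℝ)..(2 * π), u t * (a * u t + c * v t)) = 0 := by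
  have hπ : 0 < 2 * π := by positivity
  have huc : Continuous u := hu.continuous
  have hud : ∀ t, HasDerivAt u (deriv u t) t :=
    fun t => (hu.differentiable one_ne_zero t).hasDerivAt
  have hgc : Continuous (fun t => u t * (a * u t + c * v t)) := by
    continuity
  have hu2π : u (2 * π) = u 0 := by
    have := hp 0; simpa using this
  rcases eq_or_lt_of_le hθ with h0 | h0
  · -- θ = 0
    subst h0
    have hF : ∀ t ∈ Set.uIcc (0:ℝ) (2 * π),
        HasDerivAt (fun t => u t * u t / 2)
          ((-lam * b') * (u t * (a * u t + c * v t))) t := by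
      intro t _
      have h1 : HasDerivAt (fun t => u t * u t / 2)
          ((deriv u t * u t + u t * deriv u t) / 2) t :=
        ((hud t).mul (hud t)).div_const 2
      convert h1 using 1
      rw [heq t]; ring
    have hint : IntervalIntegrable
        (fun t => (-lam * b') * (u t * (a * u t + c * v t))) volume 0 (2 * π) :=
      (continuous_const.mul hgc).intervalIntegrable _ _
    have := intervalIntegral.integral_eq_sub_of_hasDerivAt hF hint
    rw [hu2π] at this
    simp only [sub_self] at this
    rw [intervalIntegral.integral_const_mul] at this
    have hk : (-lam * b') ≠ 0 := by
      have : 0 < lam * b' := mul_pos hlam hb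
      intro h; nlinarith
    exact (mul_eq_zero.mp this).resolve_left hk
  · -- 0 < θ
    set h : ℝ → ℝ := fun t => b' + θ * u t with hh_def
    have hhc : Continuous h := continuous_const.add (continuous_const.mul huc)
    have hhd : ∀ t, HasDerivAt h (θ * deriv u t) t :=
      fun t => ((hud t).const_mul θ).const_add b'
    have hhp : Function.Periodic h (2 * π) := by
      intro t; simp only [hh_def, hp t]
    -- step 1: h never vanishes
    have hne : ∀ t, h t ≠ 0 := by
      by_contra hcon
      push_neg at hcon
      obtain ⟨t0, ht0⟩ := hcon
      set c' : ℝ → ℝ := fun t => -lam * θ * (a * u t + c * v t) with hc'_def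
      have hc'c : Continuous c' := by continuity
      set C : ℝ → ℝ := fun s => ∫ τ in (0:ℝ)..s, c' τ with hC_def
      have hCd : ∀ t, HasDerivAt C (c' t) t := by
        intro t
        exact intervalIntegral.integral_hasDerivAt_right
          (hc'c.intervalIntegrable _ _)
          (hc'c.stronglyMeasurable.stronglyMeasurableAtFilter)
          hc'c.continuousAt
      set G : ℝ → ℝ := fun t => h t * Real.exp (-C t) with hG_def
      have hGd : ∀ t, HasDerivAt G 0 t := by
        intro t
        have hE : HasDerivAt (fun t => Real.exp (-C t))
            (Real.exp (-C t) * (-c' t)) t := by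
          have := ((hCd t).neg).exp
          simpa [mul_comm] using this
        have : HasDerivAt (fun t => h t * Real.exp (-C t))
            (θ * deriv u t * Real.exp (-C t) + h t * (Real.exp (-C t) * -c' t)) t :=
          (hhd t).mul hE
        convert this using 1
        rw [heq t]
        simp only [hc'_def, hh_def]
        ring
      have hGdiff : Differentiable ℝ G := fun t => (hGd t).differentiableAt
      have hGconst : ∀ t, G t = G t0 := by
        intro t
        exact is_const_of_deriv_eq_zero hGdiff (fun s => (hGd s).deriv) t t0
      have hG0 : ∀ t, h t = 0 := by
        intro t
        have := hGconst t
        rw [hG_def] at this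
        simp only at this
        rw [ht0, zero_mul] at this
        exact (mul_eq_zero.mp this).resolve_right (Real.exp_ne_zero _)
      -- then u is constant = -b'/θ, contradicting zero mean
      have huconst : ∀ t, u t = -b' / θ := by
        intro t
        have := hG0 t
        simp only [hh_def] at this
        field_simp
        linarith
      have : (∫ t in (0:ℝ)..(2 * π), u t) = (2 * π) * (-b' / θ) := by
        rw [intervalIntegral.integral_congr (g := fun _ => -b' / θ)
          (fun t _ => huconst t)]
        simp only [intervalIntegral.integral_const, smul_eq_mul, sub_zero]
      rw [hm] at this
      have hne' : (2 * π) * (-b' / θ) < 0 := by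
        apply mul_neg_of_pos_of_neg hπ
        apply div_neg_of_neg_of_pos <;> linarith
      linarith [this ▸ hne']
    -- step 2: h is everywhere positive
    have hpos : ∀ t, 0 < h t := by
      by_contra hcon
      push_neg at hcon
      obtain ⟨t0, ht0⟩ := hcon
      have ht0' : h t0 < 0 := lt_of_le_of_ne ht0 (hne t0)
      have hallneg : ∀ t, h t < 0 := by
        intro t
        by_contra hge
        push_neg at hge
        have hgt : 0 < h t := lt_of_le_of_ne hge (Ne.symm (hne t))
        have : (0:ℝ) ∈ Set.uIcc (h t0) (h t) :=
          Set.mem_uIcc.mpr (Or.inl ⟨le_of_lt ht0', le_of_lt hgt⟩)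
        obtain ⟨s, _, hs⟩ := intermediate_value_uIcc hhc.continuousOn this
        exact hne s hs
      have huneg : ∀ t, u t ≤ -b' / θ := by
        intro t
        have := hallneg t
        simp only [hh_def] at this
        rw [le_div_iff₀ h0]
        nlinarith
      have hle : (∫ t in (0:ℝ)..(2 * π), u t) ≤
          ∫ t in (0:ℝ)..(2 * π), (-b' / θ : ℝ) := by
        apply intervalIntegral.integral_mono_on (le_of_lt hπ)
          (huc.intervalIntegrable _ _) (intervalIntegrable_const)
        intro t _; exact huneg t
      rw [hm] at hle
      simp only [intervalIntegral.integral_const, smul_eq_mul, sub_zero] at hle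
      have : (2 * π) * (-b' / θ) < 0 := by
        apply mul_neg_of_pos_of_neg hπ
        apply div_neg_of_neg_of_pos <;> linarith
      linarith
    -- step 3: Lyapunov-type function F
    set F : ℝ → ℝ := fun t => (u t - (b' / θ) * Real.log (h t)) / θ with hF_def
    have hF : ∀ t ∈ Set.uIcc (0:ℝ) (2 * π),
        HasDerivAt F ((-lam) * (u t * (a * u t + c * v t))) t := by
      intro t _
      have hL : HasDerivAt (fun t => Real.log (h t))
          (θ * deriv u t / h t) t := (hhd t).log (hne t)
      have h1 : HasDerivAt F
          ((deriv u t - (b' / θ) * (θ * deriv u t / h t)) / θ) t :=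
        (((hud t).sub (hL.const_mul (b' / θ)))).div_const θ
      convert h1 using 1
      rw [heq t]
      have hht := hne t
      simp only [hh_def] at hht ⊢
      have hθ0 : θ ≠ 0 := h0.ne'
      rw [eq_div_iff hθ0, mul_div_assoc, mul_div_cancel_right₀ _ hht]
      field_simp
      ring
    have hint : IntervalIntegrable
        (fun t => (-lam) * (u t * (a * u t + c * v t))) volume 0 (2 * π) :=
      (continuous_const.mul hgc).intervalIntegrable _ _
    have hFTC := intervalIntegral.integral_eq_sub_of_hasDerivAt hF hint
    have hF2π : F (2 * π) = F 0 := by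
      simp only [hF_def, hh_def, hu2π]
    rw [hF2π, sub_self, intervalIntegral.integral_const_mul] at hFTC
    have hk : (-lam) ≠ 0 := by intro hk; nlinarith
    exact (mul_eq_zero.mp hFTC).resolve_left hk

/-- In the zero-delay case the homotopy system has no non-stationary periodic
solutions: every zero-mean 2π-periodic solution vanishes identically. -/
theorem lotka_volterra_no_delay_trivial
    (a11 a12 a21 a22 b1 b2 lam θ : ℝ)
    (hA1 : ∀ x y : ℝ, (x, y) ≠ (0, 0) →
      0 < a11 * x ^ 2 + a12 * x * y + a21 * y * x + a22 * y ^ 2)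
    (hb1 : 0 < b1) (hb2 : 0 < b2)
    (hlam : 0 < lam) (hθ : θ ∈ Set.Icc (0:ℝ) 1)
    (x1 x2 : ℝ → ℝ) (hx1 : ContDiff ℝ 1 x1) (hx2 : ContDiff ℝ 1 x2)
    (hp1 : Function.Periodic x1 (2 * π)) (hp2 : Function.Periodic x2 (2 * π))
    (hm1 : (∫ t in (0:ℝ)..(2 * π), x1 t) = 0)
    (hm2 : (∫ t in (0:ℝ)..(2 * π), x2 t) = 0)
    (heq1 : ∀ t : ℝ, deriv x1 t =
      -lam * (a11 * x1 t + a12 * x2 t) * (b1 + θ * x1 t))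
    (heq2 : ∀ t : ℝ, deriv x2 t =
      -lam * (a21 * x1 t + a22 * x2 t) * (b2 + θ * x2 t)) :
    ∀ t : ℝ, x1 t = 0 ∧ x2 t = 0 := by
  have hπ : 0 < 2 * π := by positivity
  have hc1 : Continuous x1 := hx1.continuous
  have hc2 : Continuous x2 := hx2.continuous
  have I1 := lv_key_int_zero a11 a12 b1 lam θ x1 x2 hx1 hc2 hp1 hm1 hb1 hlam hθ.1 heq1
  have heq2' : ∀ t : ℝ, deriv x2 t =
      -lam * (a22 * x2 t + a21 * x1 t) * (b2 + θ * x2 t) := by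
    intro t; rw [heq2 t]; ring
  have I2 := lv_key_int_zero a22 a21 b2 lam θ x2 x1 hx2 hc1 hp2 hm2 hb2 hlam hθ.1 heq2'
  set Q : ℝ → ℝ := fun t =>
    a11 * x1 t ^ 2 + a12 * x1 t * x2 t + a21 * x2 t * x1 t + a22 * x2 t ^ 2
    with hQ_def
  have hQc : Continuous Q := by simp only [hQ_def]; fun_prop
  have hQint : (∫ t in (0:ℝ)..(2 * π), Q t) = 0 := by
    have : ∀ t, Q t = x1 t * (a11 * x1 t + a12 * x2 t)
        + x2 t * (a22 * x2 t + a21 * x1 t) := by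
      intro t; simp only [hQ_def]; ring
    rw [intervalIntegral.integral_congr (g := fun t =>
      x1 t * (a11 * x1 t + a12 * x2 t) + x2 t * (a22 * x2 t + a21 * x1 t))
      (fun t _ => this t)]
    rw [intervalIntegral.integral_add
      ((by fun_prop : Continuous fun t => x1 t * (a11 * x1 t + a12 * x2 t)).intervalIntegrable _ _)
      ((by fun_prop : Continuous fun t => x2 t * (a22 * x2 t + a21 * x1 t)).intervalIntegrable _ _)]
    rw [I1, I2, add_zero]
  have hQ0 : ∀ t, 0 ≤ Q t := by
    intro t
    by_cases hx : x1 t = 0 ∧ x2 t = 0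
    · simp [hQ_def, hx.1, hx.2]
    · have : (x1 t, x2 t) ≠ (0, 0) :=
        fun h => hx ⟨congrArg Prod.fst h, congrArg Prod.snd h⟩
      exact le_of_lt (hA1 _ _ this)
  -- main claim: Q vanishes identically
  have hQzero : ∀ t, Q t = 0 := by
    intro t
    by_contra hQt
    -- find a representative s ∈ Ioc 0 (2π) with Q s > 0
    have hQtpos : 0 < Q t := lt_of_le_of_ne (hQ0 t) (Ne.symm hQt)
    set n : ℤ := ⌊t / (2 * π)⌋ with hn_def
    set s0 : ℝ := t - n * (2 * π) with hs0_def
    have hs0mem : s0 ∈ Set.Ico (0:ℝ) (2 * π) :=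
      ⟨Int.sub_floor_div_mul_nonneg t hπ, Int.sub_floor_div_mul_lt t hπ⟩
    have hQs0 : Q s0 = Q t := by
      simp only [hQ_def, hs0_def, hp1.sub_int_mul_eq n, hp2.sub_int_mul_eq n]
    obtain ⟨s, hsmem, hQs⟩ : ∃ s ∈ Set.Ioc (0:ℝ) (2 * π), 0 < Q s := by
      rcases eq_or_lt_of_le hs0mem.1 with h0 | h0
      · refine ⟨2 * π, ⟨hπ, le_refl _⟩, ?_⟩
        have hQper : Q (2 * π) = Q 0 := by
          simp only [hQ_def]
          have e1 := hp1 0; have e2 := hp2 0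
          simp only [zero_add] at e1 e2
          rw [e1, e2]
        have h00 : Q 0 = Q t := by rw [h0, hQs0]
        rw [hQper, h00]
        exact hQtpos
      · exact ⟨s0, ⟨h0, le_of_lt hs0mem.2⟩, by rw [hQs0]; exact hQtpos⟩
    -- Q > 0 on a neighborhood of s
    have hopen : IsOpen {y : ℝ | 0 < Q y} := isOpen_lt continuous_const hQc
    obtain ⟨ε, hε, hball⟩ := Metric.isOpen_iff.mp hopen s hQs
    set c0 : ℝ := max (s - ε) 0 with hc0_def
    have hc0lt : c0 < s := max_lt (by linarith) hsmem.1
    have hsub1 : Set.Ioo c0 s ⊆ Function.support Q := by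
      intro y hy
      have : y ∈ Metric.ball s ε := by
        rw [Metric.mem_ball, Real.dist_eq, abs_lt]
        constructor
        · have := hy.1; have := le_max_left (s - ε) 0; linarith [hy.1]
        · linarith [hy.2]
      exact ne_of_gt (hball this)
    have hsub2 : Set.Ioo c0 s ⊆ Set.Ioc 0 (2 * π) := by
      intro y hy
      exact ⟨lt_of_le_of_lt (le_max_right _ _) hy.1, le_trans (le_of_lt hy.2) hsmem.2⟩
    have hμ : 0 < volume (Function.support Q ∩ Set.Ioc 0 (2 * π)) := by
      have h1 : volume (Set.Ioo c0 s) ≤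
          volume (Function.support Q ∩ Set.Ioc 0 (2 * π)) :=
        measure_mono (Set.subset_inter hsub1 hsub2)
      have h2 : 0 < volume (Set.Ioo c0 s) := by
        rw [Real.volume_Ioo]
        simp only [ENNReal.ofReal_pos]
        linarith
      exact lt_of_lt_of_le h2 h1
    have hIpos : 0 < ∫ t in (0:ℝ)..(2 * π), Q t := by
      rw [intervalIntegral.integral_pos_iff_support_of_nonneg_ae'
        (Filter.Eventually.of_forall hQ0) (hQc.intervalIntegrable _ _)]
      exact ⟨hπ, hμ⟩
    rw [hQint] at hIpos
    exact lt_irrefl 0 hIpos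
  intro t
  have hQt := hQzero t
  by_contra hcon
  rw [not_and_or] at hcon
  have : (x1 t, x2 t) ≠ (0, 0) := by
    intro h
    exact hcon.elim (fun h1 => h1 (congrArg Prod.fst h)) (fun h2 => h2 (congrArg Prod.snd h))
  have := hA1 _ _ this
  simp only [hQ_def] at hQt
  linarith
end

section
/- Let b > 0 and c ∈ ℝ. Let g : ℝ → ℝ be a continuous 2π-periodic function with ∫₀^{2π} g(t) dt = 0, and let x : ℝ → ℝ be a continuously differentiable 2π-periodic function with x(t) > −b for all t, satisfying x'(t) = g(t)(b + x(t)) − c for all t ∈ ℝ. Then c = 0. -/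
open Real

/-- Vanishing of the mean-correction constant: if a 2π-periodic function x
with x(t) > −b satisfies x'(t) = g(t)(b + x(t)) − c for a zero-mean 2π-periodic
continuous g, then c = 0. -/
theorem mean_correction_constant_vanishes
    (b c : ℝ) (hb : 0 < b) (g x : ℝ → ℝ)
    (hg : Continuous g) (hgp : Function.Periodic g (2 * π))
    (hgm : (∫ t in (0:ℝ)..(2 * π), g t) = 0)
    (hx : ContDiff ℝ 1 x) (hxp : Function.Periodic x (2 * π))
    (hxb : ∀ t : ℝ, -b < x t)
    (heq : ∀ t : ℝ, deriv x t = g t * (b + x t) - c) :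
    c = 0 := by
  have hpos : ∀ t, 0 < b + x t := fun t => by linarith [hxb t]
  have hxc : Continuous x := hx.continuous
  have hbx : Continuous fun t => b + x t := continuous_const.add hxc
  have hinv : Continuous fun t => (b + x t)⁻¹ :=
    hbx.inv₀ fun t => (hpos t).ne'
  have hdiff : Differentiable ℝ x := hx.differentiable one_ne_zero
  -- derivative of log (b + x t)
  have hlog : ∀ t, HasDerivAt (fun s => Real.log (b + x s))
      (g t - c * (b + x t)⁻¹) t := by
    intro t
    have h1 : HasDerivAt (fun s => b + x s) (deriv x t) t :=
      ((hdiff t).hasDerivAt).const_add b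
    have h2 := (Real.hasDerivAt_log (hpos t).ne').comp t h1
    refine h2.congr_deriv ?_
    rw [heq t]
    field_simp [(hpos t).ne']
  -- integrand is continuous
  have hcont : Continuous fun t => g t - c * (b + x t)⁻¹ :=
    hg.sub (continuous_const.mul hinv)
  -- FTC over one period
  have hFTC : (∫ t in (0:ℝ)..(2 * π), (g t - c * (b + x t)⁻¹)) =
      Real.log (b + x (2 * π)) - Real.log (b + x 0) := by
    exact intervalIntegral.integral_eq_sub_of_hasDerivAt
      (fun t _ => hlog t) (hcont.intervalIntegrable _ _)
  have hper : x (2 * π) = x 0 := by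
    have := hxp 0
    simpa using this
  rw [hper, sub_self] at hFTC
  have hsplit : (∫ t in (0:ℝ)..(2 * π), (g t - c * (b + x t)⁻¹)) =
      (∫ t in (0:ℝ)..(2 * π), g t) - c * ∫ t in (0:ℝ)..(2 * π), (b + x t)⁻¹ := by
    rw [intervalIntegral.integral_sub (hg.intervalIntegrable _ _)
      ((hinv.intervalIntegrable _ _).const_mul c),
      intervalIntegral.integral_const_mul]
  rw [hsplit, hgm, zero_sub, neg_eq_zero] at hFTC
  have hIpos : 0 < ∫ t in (0:ℝ)..(2 * π), (b + x t)⁻¹ := by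
    apply intervalIntegral.intervalIntegral_pos_of_pos_on
      (hinv.intervalIntegrable _ _)
    · intro t _
      exact inv_pos.mpr (hpos t)
    · positivity
  rcases mul_eq_zero.mp hFTC with h | h
  · exact h
  · exact absurd h hIpos.ne'
end
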